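/- arXiv:1409.6337 — 3 statements merged into one kernel-verified Lean document; each statement's English description precedes it below -/
import Mathlib

section
/- Fix k, n ≥ 1 and a (n+1)k × (n+1)k positive semidefinite matrix Σ with k×k blocks Σ_{ij}, 0 ≤ i,j ≤ n, such that Σ_{00} is invertible. Let μ₁,...,μ_n ∈ ℝ^k be arbitrary, and let (g₀,g₁,...,g_n) be a random vector in ℝ^{(n+1)k} whose law is Gaussian with mean (0,μ₁,...,μ_n) and covariance Σ. Define h_i = g_i − Σ_{i0}Σ_{00}^{-1} g₀ for i = 1,...,n and h = (h₁,...,h_n) ∈ ℝ^{nk}. Let R : ℝ^k × ℝ^{nk} → ℝ be measurable, α ∈ (0,1), and let c_α(h) = inf{c ∈ ℝ : ν({ξ : R(ξ,h) ≤ c}) ≥ 1 − α}, where ν is the centered Gaussian measure N(0,Σ_{00}) on ℝ^k; assume c_α(h) is finite for every h and measurable in h. Then P{R(g₀,h) > c_α(h)} ≤ α, for every choice of the nuisance means μ₁,...,μ_n. -/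
open MeasureTheory ProbabilityTheory Matrix
open scoped ENNReal Classical

/-- The multivariate Gaussian measure `N(μ, S)` on `ι → ℝ`: the pushforward of a product of
standard one-dimensional Gaussians under `z ↦ μ + √S z`, where `√S` is the positive
semidefinite square root of `S`.  (Junk value `0` if `S` is not positive semidefinite.) -/
noncomputable def multivariateGaussian {ι : Type*} [Fintype ι] [DecidableEq ι]
    (μ : ι → ℝ) (S : Matrix ι ι ℝ) : Measure (ι → ℝ) :=
  if hS : S.PosSemidef then
    (Measure.pi fun _ : ι => gaussianReal 0 1).map (fun z => μ + (hS.1.eigenvectorUnitary.1 *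
      diagonal (((↑) : NNReal → ℝ) ∘ NNReal.sqrt ∘ Real.toNNReal ∘ hS.1.eigenvalues) *
      (star hS.1.eigenvectorUnitary : Matrix ι ι ℝ)).mulVec z)
  else 0

/-- The psd square root used in `multivariateGaussian`. -/
noncomputable def aux_psdSqrt {ι : Type*} [Fintype ι] [DecidableEq ι] {S : Matrix ι ι ℝ}
    (hS : S.PosSemidef) : Matrix ι ι ℝ :=
  hS.1.eigenvectorUnitary.1 *
      diagonal (((↑) : NNReal → ℝ) ∘ NNReal.sqrt ∘ Real.toNNReal ∘ hS.1.eigenvalues) *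
      (star hS.1.eigenvectorUnitary : Matrix ι ι ℝ)

lemma aux_psdSqrt_mul_self {ι : Type*} [Fintype ι] [DecidableEq ι] {S : Matrix ι ι ℝ}
    (hS : S.PosSemidef) : aux_psdSqrt hS * aux_psdSqrt hS = S := by
  have hU : ((star hS.1.eigenvectorUnitary : Matrix ι ι ℝ)) * hS.1.eigenvectorUnitary.1 = 1 :=
    Unitary.coe_star_mul_self _
  have hD : diagonal (((↑) : NNReal → ℝ) ∘ NNReal.sqrt ∘ Real.toNNReal ∘ hS.1.eigenvalues) *
      diagonal (((↑) : NNReal → ℝ) ∘ NNReal.sqrt ∘ Real.toNNReal ∘ hS.1.eigenvalues)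
      = diagonal (RCLike.ofReal ∘ hS.1.eigenvalues) := by
    rw [diagonal_mul_diagonal]
    congr 1
    funext i
    have := hS.eigenvalues_nonneg i
    simp [Real.toNNReal_of_nonneg this, ← Real.sqrt_eq_cases, Real.mul_self_sqrt this]
  conv_rhs => rw [hS.1.spectral_theorem, Unitary.conjStarAlgAut_apply]
  unfold aux_psdSqrt
  simp only [Matrix.mul_assoc]
  rw [← Matrix.mul_assoc _ (hS.1.eigenvectorUnitary.1), hU, Matrix.one_mul,
    ← Matrix.mul_assoc (diagonal _) (diagonal _), hD]

lemma aux_psdSqrt_isHermitian {ι : Type*} [Fintype ι] [DecidableEq ι] {S : Matrix ι ι ℝ}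
    (hS : S.PosSemidef) : (aux_psdSqrt hS).IsHermitian := by
  unfold aux_psdSqrt
  rw [Matrix.star_eq_conjTranspose]
  exact isHermitian_mul_mul_conjTranspose _ (isHermitian_diagonal _)

section AuxLemmas

variable {ι : Type*} [Fintype ι] [DecidableEq ι]

lemma aux_measurable_mulVec {κ : Type*} [Fintype κ] (M : Matrix κ ι ℝ) :
    Measurable (fun v : ι → ℝ => M.mulVec v) := by
  refine measurable_pi_lambda _ (fun m => ?_)
  exact Finset.measurable_sum _ (fun j _ => (measurable_pi_apply j).const_mul _)

lemma aux_lintegral_pi_prod (μ : ι → Measure ℝ) [∀ i, SigmaFinite (μ i)]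
    (F : ι → ℝ → ℝ≥0∞) (hF : ∀ i, Measurable (F i)) :
    ∫⁻ x, ∏ i, F i (x i) ∂Measure.pi μ = ∏ i, ∫⁻ t, F i t ∂μ i := by
  have hmeas : Measurable (fun y : ι → ℝ => ∏ i, F i (y i)) :=
    Finset.measurable_prod _ (fun i _ => (hF i).comp (measurable_pi_apply i))
  have key : ∀ s : Finset ι, ∀ x : ι → ℝ,
      (∫⋯∫⁻_s, (fun y => ∏ i, F i (y i)) ∂μ) x
        = (∏ i ∈ s, ∫⁻ t, F i t ∂μ i) * ∏ i ∈ sᶜ, F i (x i) := by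
    intro s
    induction s using Finset.induction with
    | empty => intro x; simp
    | insert i s hi ih =>
      intro x
      rw [lmarginal_insert _ hmeas hi]
      have hc : (insert i s)ᶜ = sᶜ.erase i := by
        ext j; simp [Finset.mem_erase, not_or, and_comm]
      rw [hc]
      have : ∀ xi : ℝ, (∫⋯∫⁻_s, (fun y => ∏ j, F j (y j)) ∂μ) (Function.update x i xi)
          = ((∏ j ∈ s, ∫⁻ t, F j t ∂μ j) * ∏ j ∈ sᶜ.erase i, F j (x j)) * F i xi := by
        intro xi
        rw [ih]
        have hisc : i ∈ sᶜ := Finset.mem_compl.2 hi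
        rw [← Finset.prod_erase_mul _ _ hisc]
        have : ∀ j ∈ sᶜ.erase i, F j (Function.update x i xi j) = F j (x j) := by
          intro j hj
          rw [Function.update_of_ne (Finset.mem_erase.1 hj).1]
        rw [Finset.prod_congr rfl this, Function.update_self]
        ring
      simp_rw [this]
      rw [lintegral_const_mul _ (hF i), Finset.prod_insert hi]
      ring
  have := key Finset.univ (fun _ => 0)
  simp only [Finset.compl_univ, Finset.prod_empty, mul_one] at this
  rw [lintegral_eq_lmarginal_univ (fun _ => (0:ℝ)), this]

lemma aux_pi_withDensity (f : ι → ℝ → ℝ≥0∞) (hf : ∀ i, Measurable (f i))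
    [∀ i, SigmaFinite ((volume : Measure ℝ).withDensity (f i))] :
    Measure.pi (fun i => (volume : Measure ℝ).withDensity (f i))
      = (Measure.pi (fun _ : ι => (volume : Measure ℝ))).withDensity
          (fun x => ∏ i, f i (x i)) := by
  refine (Measure.pi_eq (μ := fun i => (volume : Measure ℝ).withDensity (f i))
    (μ' := (Measure.pi (fun _ : ι => (volume : Measure ℝ))).withDensity
      (fun x => ∏ i, f i (x i)))
    (fun s hs => ?_))
  rw [withDensity_apply _ (MeasurableSet.univ_pi hs)]
  have key : ∀ x : ι → ℝ, (Set.univ.pi s).indicator (fun x => ∏ i, f i (x i)) x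
      = ∏ i, (s i).indicator (f i) (x i) := by
    intro x
    by_cases hx : x ∈ Set.univ.pi s
    · rw [Set.indicator_of_mem hx]
      exact Finset.prod_congr rfl (fun i _ => (Set.indicator_of_mem (hx i trivial) _).symm)
    · rw [Set.indicator_of_notMem hx]
      have : ∃ j, x j ∉ s j := by
        by_contra hcon
        push_neg at hcon
        exact hx (fun j _ => hcon j)
      obtain ⟨j, hj⟩ := this
      exact (Finset.prod_eq_zero (Finset.mem_univ j) (Set.indicator_of_notMem hj _)).symm
  rw [← lintegral_indicator (MeasurableSet.univ_pi hs), funext key]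
  rw [aux_lintegral_pi_prod _ _ (fun i => (hf i).indicator (hs i))]
  exact Finset.prod_congr rfl (fun i _ =>
    by rw [lintegral_indicator (hs i), withDensity_apply _ (hs i)])

lemma aux_gaussian_pi_eq_withDensity :
    (Measure.pi fun _ : ι => gaussianReal 0 1)
      = (Measure.pi (fun _ : ι => (volume : Measure ℝ))).withDensity
          (fun x => ∏ i, gaussianPDF 0 1 (x i)) := by
  have h1 : gaussianReal (0:ℝ) 1 = (volume : Measure ℝ).withDensity (gaussianPDF 0 1) :=
    gaussianReal_of_var_ne_zero 0 one_ne_zero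
  haveI : SigmaFinite ((volume : Measure ℝ).withDensity (gaussianPDF 0 1)) := by
    rw [← h1]; infer_instance
  rw [show (fun _ : ι => gaussianReal 0 1)
      = fun _ : ι => (volume : Measure ℝ).withDensity (gaussianPDF 0 1) from funext fun _ => h1]
  exact aux_pi_withDensity _ (fun _ => measurable_gaussianPDF 0 1)

lemma aux_prod_gaussianPDF_eq (x : ι → ℝ) :
    ∏ i, gaussianPDF 0 1 (x i)
      = ENNReal.ofReal ((Real.sqrt (2 * Real.pi))⁻¹ ^ (Fintype.card ι)
          * Real.exp (-(∑ i, x i ^ 2) / 2)) := by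
  have h : ∀ i : ι, gaussianPDF 0 1 (x i)
      = ENNReal.ofReal ((Real.sqrt (2 * Real.pi))⁻¹ * Real.exp (-(x i ^ 2) / 2)) := by
    intro i
    rw [gaussianPDF, gaussianPDFReal]
    norm_num
  simp_rw [h]
  rw [← ENNReal.ofReal_prod_of_nonneg]
  · congr 1
    rw [Finset.prod_mul_distrib, Finset.prod_const, ← Real.exp_sum]
    rw [Finset.card_univ, ← Finset.sum_div, Finset.sum_neg_distrib]
  · intro i _
    positivity

lemma aux_sq_sum_mulVec_eq {O : Matrix ι ι ℝ} (hO : Oᵀ * O = 1) (x : ι → ℝ) :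
    ∑ i, (O.mulVec x i) ^ 2 = ∑ i, x i ^ 2 := by
  have h1 : ∀ v : ι → ℝ, ∑ i, v i ^ 2 = v ⬝ᵥ v := by
    intro v; simp [dotProduct, sq]
  rw [h1, h1, dotProduct_mulVec, ← mulVec_transpose, mulVec_mulVec, hO, one_mulVec]

lemma aux_abs_det_eq_one {O : Matrix ι ι ℝ} (hO : Oᵀ * O = 1) : |O.det| = 1 := by
  have : O.det * O.det = 1 := by
    have := congrArg Matrix.det hO
    rwa [det_mul, det_transpose, det_one] at this
  rcases mul_self_eq_one_iff.1 this with h | h <;> simp [h]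

lemma aux_volume_preserving_mulVec {O : Matrix ι ι ℝ} (hO : Oᵀ * O = 1) :
    MeasurePreserving (fun x : ι → ℝ => O.mulVec x)
      (Measure.pi (fun _ : ι => (volume : Measure ℝ)))
      (Measure.pi (fun _ : ι => (volume : Measure ℝ))) := by
  have hdet : O.det ≠ 0 := by
    intro h
    have := aux_abs_det_eq_one hO
    rw [h] at this; simp at this
  refine ⟨aux_measurable_mulVec O, ?_⟩
  have : (fun x : ι → ℝ => O.mulVec x) = ⇑(toLin' O) := by
    ext x i; simp [toLin'_apply]
  rw [this, show (Measure.pi (fun _ : ι => (volume : Measure ℝ))) = (volume : Measure (ι → ℝ))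
      from rfl,
    Real.map_matrix_volume_pi_eq_smul_volume_pi hdet, abs_inv, aux_abs_det_eq_one hO]
  simp

lemma aux_gaussian_pi_map_mulVec {O : Matrix ι ι ℝ} (hO2 : Oᵀ * O = 1) :
    (Measure.pi fun _ : ι => gaussianReal 0 1).map (fun x => O.mulVec x)
      = (Measure.pi fun _ : ι => gaussianReal 0 1) := by
  set F : (ι → ℝ) → ℝ≥0∞ := fun x => ∏ i, gaussianPDF 0 1 (x i) with hF
  have hFmeas : Measurable F :=
    Finset.measurable_prod _ (fun i _ => (measurable_gaussianPDF 0 1).comp (measurable_pi_apply i))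
  have hinv : ∀ x, F (O.mulVec x) = F x := by
    intro x
    rw [hF]; dsimp only
    rw [aux_prod_gaussianPDF_eq, aux_prod_gaussianPDF_eq, aux_sq_sum_mulVec_eq hO2]
  have hmp := aux_volume_preserving_mulVec hO2
  refine Measure.ext (fun s hs => ?_)
  rw [Measure.map_apply hmp.measurable hs, aux_gaussian_pi_eq_withDensity,
    withDensity_apply _ (hmp.measurable hs), withDensity_apply _ hs]
  calc ∫⁻ x in (fun x => O.mulVec x) ⁻¹' s, F x ∂(Measure.pi (fun _ : ι => (volume : Measure ℝ)))
      = ∫⁻ x in (fun x => O.mulVec x) ⁻¹' s, F (O.mulVec x)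
          ∂(Measure.pi (fun _ : ι => (volume : Measure ℝ))) := by
        refine setLIntegral_congr_fun ((hmp.measurable hs)) (fun x _ => ?_)
        rw [hinv]
    _ = ∫⁻ y in s, F y ∂(Measure.pi (fun _ : ι => (volume : Measure ℝ))) :=
        hmp.setLIntegral_comp_preimage hs hFmeas

lemma aux_gaussian_pi_map_mulVec_rect {κ : Type*} [Fintype κ] [DecidableEq κ]
    (e : ι ≃ κ) (O : Matrix κ ι ℝ) (hO2 : Oᵀ * O = 1) :
    (Measure.pi fun _ : ι => gaussianReal 0 1).map (fun x => O.mulVec x)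
      = (Measure.pi fun _ : κ => gaussianReal 0 1) := by
  set O' : Matrix ι ι ℝ := O.submatrix e id with hO'
  have hO'T : O'ᵀ = Oᵀ.submatrix id e := by ext i j; rfl
  have hO2' : O'ᵀ * O' = 1 := by
    rw [hO'T, hO']
    rw [show (id : ι → ι) = ⇑(Equiv.refl ι) from rfl]
    rw [submatrix_mul_equiv Oᵀ O _ e _, hO2]
    exact submatrix_one_equiv (Equiv.refl ι)
  set r : (ι → ℝ) → (κ → ℝ) := fun v m => v (e.symm m) with hr
  have hcomp : (fun x : ι → ℝ => O.mulVec x) = r ∘ (fun x => O'.mulVec x) := by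
    funext x; funext m
    simp only [hr, Function.comp_apply, hO', mulVec, submatrix_apply, id_eq,
      Equiv.apply_symm_apply]
  have hrm : Measurable r := measurable_pi_lambda _ (fun m => measurable_pi_apply _)
  rw [hcomp, ← Measure.map_map hrm (aux_measurable_mulVec O'), aux_gaussian_pi_map_mulVec hO2']
  have hmp := measurePreserving_piCongrLeft (α := fun _ : κ => ℝ)
    (μ := fun _ : κ => gaussianReal 0 1) e
  have : r = ⇑(MeasurableEquiv.piCongrLeft (fun _ : κ => ℝ) e) := by
    funext v m
    have h2 := Equiv.piCongrLeft_apply_apply (fun _ : κ => ℝ) e v (e.symm m)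
    rw [Equiv.apply_symm_apply] at h2
    simpa [hr, MeasurableEquiv.coe_piCongrLeft] using h2.symm
  rw [this, hmp.map_eq]

lemma aux_transpose_mul_self_eq_one {κ : Type*} [Fintype κ]
    [DecidableEq κ] (e : κ ≃ ι) (O : Matrix κ ι ℝ) (h : O * Oᵀ = 1) : Oᵀ * O = 1 := by
  set O₁ : Matrix ι ι ℝ := O.submatrix e.symm id with hO₁
  have hT : O₁ᵀ = Oᵀ.submatrix id e.symm := by ext i j; rfl
  have h1 : O₁ * O₁ᵀ = 1 := by
    rw [hO₁, hT]
    rw [show (id : ι → ι) = ⇑(Equiv.refl ι) from rfl]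
    calc O.submatrix (⇑e.symm) ⇑(Equiv.refl ι) * Oᵀ.submatrix (⇑(Equiv.refl ι)) ⇑e.symm
        = (O * Oᵀ).submatrix (⇑e.symm) ⇑e.symm := by
          rw [submatrix_mul_equiv]
      _ = 1 := by rw [h, submatrix_one_equiv e.symm]
  have h2 : O₁ᵀ * O₁ = 1 := mul_eq_one_comm.1 h1
  have h3 : O₁ᵀ * O₁ = Oᵀ * O := by
    rw [hO₁, hT]
    calc Oᵀ.submatrix id ⇑e.symm * O.submatrix (⇑e.symm) id
        = (Oᵀ * O).submatrix id id := by rw [submatrix_mul_equiv]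
      _ = Oᵀ * O := by rw [submatrix_id_id]
  rw [← h3, h2]

lemma aux_exists_rotation_extension {k : ℕ} {κ : Type*} [Fintype κ] [DecidableEq κ]
    (hcard : Fintype.card ι = Fintype.card (Fin k ⊕ κ))
    (U : Matrix (Fin k) ι ℝ) (hUU : U * Uᵀ = 1) :
    ∃ O : Matrix (Fin k ⊕ κ) ι ℝ, O * Oᵀ = 1 ∧ Oᵀ * O = 1 ∧
      ∀ a : Fin k, ∀ j, O (Sum.inl a) j = U a j := by
  classical
  set E := EuclideanSpace ℝ ι
  set u : Fin k → E := fun a => (WithLp.equiv 2 (ι → ℝ)).symm (fun j => U a j) with hu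
  have huapp : ∀ a j, u a j = U a j := fun a j => rfl
  have hinner : ∀ a b : Fin k, (inner ℝ (u a) (u b) : ℝ) = if a = b then 1 else 0 := by
    intro a b
    rw [PiLp.inner_apply]
    have h2 : ∑ j, (inner ℝ (u a j) (u b j) : ℝ) = (U * Uᵀ) a b := by
      simp [Matrix.mul_apply, huapp, RCLike.inner_apply, mul_comm]
    rw [h2, hUU, Matrix.one_apply]
  set v : Fin k ⊕ κ → E := Sum.elim u (fun _ => 0) with hv
  have hres : Orthonormal ℝ ((Set.range (Sum.inl : Fin k → Fin k ⊕ κ)).restrict v) := by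
    rw [orthonormal_iff_ite]
    rintro ⟨x, hx⟩ ⟨y, hy⟩
    obtain ⟨a, rfl⟩ := Set.mem_range.1 hx
    obtain ⟨b, rfl⟩ := Set.mem_range.1 hy
    show inner ℝ (v (Sum.inl a)) (v (Sum.inl b)) = if (⟨Sum.inl a, hx⟩ :
      Set.range (Sum.inl : Fin k → Fin k ⊕ κ)) = ⟨Sum.inl b, hy⟩ then 1 else 0
    simp only [Set.restrict_apply, hv, Sum.elim_inl]
    rw [hinner]
    by_cases hab : a = b
    · subst hab; simp
    · have : (Sum.inl a : Fin k ⊕ κ) ≠ Sum.inl b := fun hcon => hab (Sum.inl.inj hcon)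
      simp [hab, Subtype.ext_iff, this]
  have hcard' : Module.finrank ℝ E = Fintype.card (Fin k ⊕ κ) := by
    rw [finrank_euclideanSpace, hcard]
  obtain ⟨b, hb⟩ := hres.exists_orthonormalBasis_extension_of_card_eq hcard'
  have hOO : (Matrix.of (fun m j => b m j)) * (Matrix.of (fun m j => b m j))ᵀ = 1 := by
    ext m m'
    have h3 := (orthonormal_iff_ite.1 b.orthonormal) m m'
    rw [PiLp.inner_apply] at h3
    simpa [Matrix.mul_apply, Matrix.one_apply, RCLike.inner_apply, mul_comm] using h3
  refine ⟨Matrix.of (fun m j => b m j), hOO, ?_, ?_⟩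
  · exact aux_transpose_mul_self_eq_one (Fintype.equivOfCardEq hcard.symm) _ hOO
  · intro a j
    have := hb (Sum.inl a) ⟨a, rfl⟩
    simp only [Matrix.of_apply]
    rw [this, hv, Sum.elim_inl, huapp]

lemma aux_quantile_bound {X : Type*} [MeasurableSpace X] (ν : Measure X)
    [IsProbabilityMeasure ν]
    (f : X → ℝ) (hf : Measurable f) (α : ℝ) (hα : α ∈ Set.Ioo (0:ℝ) 1)
    (hne : {cc : ℝ | ENNReal.ofReal (1 - α) ≤ ν {ξ | f ξ ≤ cc}}.Nonempty)
    (hbdd : BddBelow {cc : ℝ | ENNReal.ofReal (1 - α) ≤ ν {ξ | f ξ ≤ cc}}) :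
    ν {ξ | f ξ > sInf {cc : ℝ | ENNReal.ofReal (1 - α) ≤ ν {ξ | f ξ ≤ cc}}}
      ≤ ENNReal.ofReal α := by
  set T := {cc : ℝ | ENNReal.ofReal (1 - α) ≤ ν {ξ | f ξ ≤ cc}} with hT
  set t := sInf T with ht
  have hup : ∀ a ∈ T, ∀ b, a ≤ b → b ∈ T := by
    intro a ha b hab
    exact le_trans ha (measure_mono (fun ξ hξ => le_trans hξ hab))
  have hmem : ∀ m : ℕ, t + 1 / (m + 1) ∈ T := by
    intro m
    have hlt : t < t + 1 / (m + 1) := by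
      have : (0:ℝ) < 1 / (m + 1) := by positivity
      linarith
    obtain ⟨a, haT, halt⟩ := (csInf_lt_iff hbdd hne).1 hlt
    exact hup a haT _ halt.le
  have hInter : {ξ | f ξ ≤ t} = ⋂ m : ℕ, {ξ | f ξ ≤ t + 1 / (m + 1)} := by
    ext ξ
    simp only [Set.mem_setOf_eq, Set.mem_iInter]
    constructor
    · intro hle m
      have : (0:ℝ) ≤ 1 / (m + 1) := by positivity
      linarith
    · intro hall
      by_contra hcon
      push_neg at hcon
      obtain ⟨m, hm⟩ := exists_nat_one_div_lt (show (0:ℝ) < f ξ - t by linarith)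
      have := hall m
      linarith
  have hanti : Antitone (fun m : ℕ => {ξ | f ξ ≤ t + 1 / (m + 1)}) := by
    intro m m' hmm ξ hξ
    simp only [Set.mem_setOf_eq] at *
    have : (1:ℝ) / (m' + 1) ≤ 1 / (m + 1) := by
      apply one_div_le_one_div_of_le
      · positivity
      · exact_mod_cast add_le_add_left (Nat.cast_le.2 hmm) 1
    linarith
  have hle1 : ENNReal.ofReal (1 - α) ≤ ν {ξ | f ξ ≤ t} := by
    rw [hInter, hanti.measure_iInter
      (fun m => (measurableSet_le hf measurable_const).nullMeasurableSet)
      ⟨0, measure_ne_top _ _⟩]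
    exact le_iInf (fun m => hmem m)
  have hcompl : {ξ | f ξ > t} = {ξ | f ξ ≤ t}ᶜ := by
    ext ξ; simp [not_le]
  rw [hcompl, measure_compl (measurableSet_le hf measurable_const) (measure_ne_top _ _),
    measure_univ]
  have h2 : (1:ℝ≥0∞) - ENNReal.ofReal (1 - α) ≤ ENNReal.ofReal α := by
    rw [← ENNReal.ofReal_one, ← ENNReal.ofReal_sub _ (by linarith [hα.2] : (0:ℝ) ≤ 1 - α)]
    apply ENNReal.ofReal_le_ofReal
    linarith
  exact le_trans (tsub_le_tsub_left hle1 1) h2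

end AuxLemmas


set_option maxHeartbeats 1000000

/-- **Lemma 1 for a finite parameter space.**  The vector `(g₀,g₁,…,g_n)` in `ℝ^{(n+1)k}`
(indexed by `Fin (n+1) × Fin k`) is Gaussian with mean `(0,μ₁,…,μ_n)` and psd covariance `Σ`
whose upper-left `k×k` block `Σ₀₀` is invertible.  With `h_i = g_i − Σ_{i0}Σ₀₀⁻¹g₀`,
`ν = N(0,Σ₀₀)` and the conditional critical value
`c_α(h) = inf{c : ν({ξ : R(ξ,h) ≤ c}) ≥ 1−α}` (assumed finite and measurable),
the conditional test has size at most `α` for every value of the nuisance means. -/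
theorem stmt_3 {Ω : Type*} [MeasurableSpace Ω] (P : Measure Ω) [IsProbabilityMeasure P]
    (k n : ℕ) (hk : 1 ≤ k) (hn : 1 ≤ n)
    (S : Matrix (Fin (n + 1) × Fin k) (Fin (n + 1) × Fin k) ℝ) (hS : S.PosSemidef)
    (S00 : Matrix (Fin k) (Fin k) ℝ)
    (hS00 : S00 = Matrix.of fun a b => S (0, a) (0, b))
    (hS00unit : IsUnit S00)
    (μ : Fin (n + 1) × Fin k → ℝ) (hμ0 : ∀ a : Fin k, μ (0, a) = 0)
    (g : Ω → Fin (n + 1) × Fin k → ℝ) (hg : Measurable g)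
    (hlaw : P.map g = multivariateGaussian μ S)
    (h : Ω → Fin n × Fin k → ℝ)
    (hdef : ∀ (ω : Ω) (i : Fin n) (a : Fin k),
      h ω (i, a) = g ω (i.succ, a) -
        ((Matrix.of fun a' b' => S (i.succ, a') (0, b')) * S00⁻¹).mulVec
          (fun b => g ω (0, b)) a)
    (R : (Fin k → ℝ) → (Fin n × Fin k → ℝ) → ℝ)
    (hR : Measurable fun p : (Fin k → ℝ) × (Fin n × Fin k → ℝ) => R p.1 p.2)
    (α : ℝ) (hα : α ∈ Set.Ioo (0 : ℝ) 1)
    (c : (Fin n × Fin k → ℝ) → ℝ)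
    (hc : ∀ hh, c hh = sInf {cc : ℝ |
      ENNReal.ofReal (1 - α) ≤ multivariateGaussian (0 : Fin k → ℝ) S00 {ξ | R ξ hh ≤ cc}})
    (hfin : ∀ hh,
      {cc : ℝ | ENNReal.ofReal (1 - α) ≤
        multivariateGaussian (0 : Fin k → ℝ) S00 {ξ | R ξ hh ≤ cc}}.Nonempty ∧
      BddBelow {cc : ℝ | ENNReal.ofReal (1 - α) ≤
        multivariateGaussian (0 : Fin k → ℝ) S00 {ξ | R ξ hh ≤ cc}})
    (hcm : Measurable c) :
    P {ω | R (fun a => g ω (0, a)) (h ω) > c (h ω)} ≤ ENNReal.ofReal α := by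
  classical
  -- index abbreviations
  have hdetS00 : IsUnit S00.det := (Matrix.isUnit_iff_isUnit_det S00).1 hS00unit
  set T := aux_psdSqrt hS with hTdef
  have hTT : T * T = S := aux_psdSqrt_mul_self hS
  have hTsymm : Tᵀ = T := by
    have h1 := aux_psdSqrt_isHermitian hS
    rw [← conjTranspose_eq_transpose_of_trivial]; exact h1
  set r0 : Fin k → (Fin (n+1) × Fin k) := fun a => (0, a) with hr0
  set rs : (Fin n × Fin k) → (Fin (n+1) × Fin k) := fun p => (p.1.succ, p.2) with hrs
  have hS00sub : S00 = S.submatrix r0 r0 := by rw [hS00]; ext a b; rfl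
  have hS00psd : S00.PosSemidef := by rw [hS00sub]; exact hS.submatrix r0
  set A : Matrix (Fin k) (Fin (n+1) × Fin k) ℝ := T.submatrix r0 id with hA
  set Sb : Matrix (Fin n × Fin k) (Fin k) ℝ := S.submatrix rs r0 with hSb
  set M : Matrix (Fin n × Fin k) (Fin k) ℝ := Sb * S00⁻¹ with hM
  set C : Matrix (Fin n × Fin k) (Fin (n+1) × Fin k) ℝ := T.submatrix rs id - M * A with hC
  have hAT : Aᵀ = T.submatrix id r0 := by
    ext i j
    simp only [hA, Matrix.transpose_apply, Matrix.submatrix_apply, id_eq]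
    exact congrFun (congrFun hTsymm i) (r0 j)
  have hid : (id : (Fin (n+1) × Fin k) → (Fin (n+1) × Fin k))
      = ⇑(Equiv.refl (Fin (n+1) × Fin k)) := rfl
  have hAA : A * Aᵀ = S00 := by
    rw [hA, hAT, hid, submatrix_mul_equiv T T r0 _ r0, hTT, ← hS00sub]
  have hCA : C * Aᵀ = 0 := by
    have h1 : T.submatrix rs id * Aᵀ = Sb := by
      rw [hAT, hid, submatrix_mul_equiv T T rs _ r0, hTT, hSb]
    rw [hC, Matrix.sub_mul, h1, Matrix.mul_assoc, hAA, hM, Matrix.mul_assoc,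
      Matrix.nonsing_inv_mul S00 hdetS00, Matrix.mul_one, sub_self]
  set Q := aux_psdSqrt hS00psd with hQdef
  have hQQ : Q * Q = S00 := aux_psdSqrt_mul_self hS00psd
  have hQsymm : Qᵀ = Q := by
    have h1 := aux_psdSqrt_isHermitian hS00psd
    rw [← conjTranspose_eq_transpose_of_trivial]; exact h1
  have hQdet : IsUnit Q.det := by
    have : Q.det * Q.det = S00.det := by rw [← det_mul, hQQ]
    exact isUnit_of_mul_isUnit_left (this ▸ hdetS00)
  have hQinv : Q * Q⁻¹ = 1 := mul_nonsing_inv Q hQdet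
  have hQinv' : Q⁻¹ * Q = 1 := nonsing_inv_mul Q hQdet
  have hQinvT : (Q⁻¹)ᵀ = Q⁻¹ := by rw [Matrix.transpose_nonsing_inv, hQsymm]
  set U : Matrix (Fin k) (Fin (n+1) × Fin k) ℝ := Q⁻¹ * A with hU
  have hQU : Q * U = A := by rw [hU, ← Matrix.mul_assoc, hQinv, Matrix.one_mul]
  have hUU : U * Uᵀ = 1 := by
    have e1 : U * Uᵀ = Q⁻¹ * (A * (Aᵀ * Q⁻¹)) := by
      rw [hU, transpose_mul, hQinvT]
      simp only [Matrix.mul_assoc]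
    rw [e1, ← Matrix.mul_assoc A, hAA, ← hQQ]
    simp only [Matrix.mul_assoc]
    rw [hQinv, Matrix.mul_one, hQinv']
  have hCU : C * Uᵀ = 0 := by
    rw [hU, transpose_mul, hQinvT, ← Matrix.mul_assoc, hCA, Matrix.zero_mul]
  have hcard : Fintype.card (Fin (n+1) × Fin k)
      = Fintype.card (Fin k ⊕ (Fin n × Fin k)) := by
    simp [Fintype.card_prod, Fintype.card_sum, Fintype.card_fin]
    ring
  obtain ⟨O, hOO, hOtO, hOU⟩ := aux_exists_rotation_extension hcard U hUU
  set D : Matrix (Fin n × Fin k) (Fin n × Fin k) ℝ :=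
    Matrix.of (fun p q => (C * Oᵀ) p (Sum.inr q)) with hD
  -- measures
  set γI := (Measure.pi fun _ : Fin (n+1) × Fin k => gaussianReal 0 1) with hγI
  set γK := (Measure.pi fun _ : Fin k ⊕ (Fin n × Fin k) => gaussianReal 0 1) with hγK
  set γ1 := (Measure.pi fun _ : Fin k => gaussianReal 0 1) with hγ1
  set γ2 := (Measure.pi fun _ : Fin n × Fin k => gaussianReal 0 1) with hγ2
  set ν := multivariateGaussian (0 : Fin k → ℝ) S00 with hνdef
  have hν : ν = γ1.map (fun z => Q.mulVec z) := by
    rw [hνdef, _root_.multivariateGaussian, dif_pos hS00psd]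
    congr 1
    funext z
    rw [zero_add]
    rfl
  haveI hνprob : IsProbabilityMeasure ν := by
    rw [hν]
    exact Measure.isProbabilityMeasure_map (aux_measurable_mulVec Q).aemeasurable
  -- the function H
  set H : ((Fin (n+1) × Fin k) → ℝ) → ((Fin n × Fin k) → ℝ) :=
    fun x p => x (rs p) - M.mulVec (fun b => x (r0 b)) p with hH
  have hHmeas : Measurable H := by
    refine measurable_pi_lambda _ (fun p => ?_)
    refine (measurable_pi_apply _).sub ?_
    simp only [Matrix.mulVec, dotProduct]
    exact Finset.measurable_sum _
      (fun b _ => (measurable_pi_apply (r0 b)).const_mul _)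
  have hhH : ∀ ω, h ω = H (g ω) := by
    intro ω
    funext p
    obtain ⟨i, a⟩ := p
    rw [hdef ω i a]
    simp only [hH, hM, hSb, hrs, hr0, Matrix.mulVec, Matrix.mul_apply, dotProduct,
      Matrix.of_apply, Matrix.submatrix_apply]
  -- the rejection set
  set W : Set ((Fin (n+1) × Fin k) → ℝ) :=
    {x | R (fun a => x (r0 a)) (H x) > c (H x)} with hW
  have hWmeas : MeasurableSet W := by
    have m1 : Measurable (fun x : (Fin (n+1) × Fin k) → ℝ => fun a => x (r0 a)) :=
      measurable_pi_lambda _ (fun a => measurable_pi_apply _)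
    exact measurableSet_lt (hcm.comp hHmeas) (hR.comp (m1.prodMk hHmeas))
  have step1 : {ω | R (fun a => g ω (0, a)) (h ω) > c (h ω)} = g ⁻¹' W := by
    ext ω
    simp only [Set.mem_setOf_eq, Set.mem_preimage, hW, hhH ω, hr0]
  have hφmeas : Measurable (fun z : (Fin (n+1) × Fin k) → ℝ => μ + T.mulVec z) := by
    refine measurable_pi_lambda _ (fun j => ?_)
    simp only [Pi.add_apply, Matrix.mulVec, dotProduct]
    exact (Finset.measurable_sum _
      (fun j' _ => (measurable_pi_apply j').const_mul _)).const_add _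
  have step2 : P {ω | R (fun a => g ω (0, a)) (h ω) > c (h ω)}
      = γI ((fun z => μ + T.mulVec z) ⁻¹' W) := by
    rw [step1, ← Measure.map_apply hg hWmeas, hlaw, _root_.multivariateGaussian, dif_pos hS]
    exact Measure.map_apply hφmeas hWmeas
  -- pointwise identification
  set βv : (Fin n × Fin k) → ℝ := fun p => μ (rs p) with hβv
  have hx0 : ∀ z : (Fin (n+1) × Fin k) → ℝ,
      (fun a => (μ + T.mulVec z) (r0 a)) = A.mulVec z := by
    intro z
    funext a
    simp only [Pi.add_apply, hA, Matrix.mulVec, dotProduct, Matrix.submatrix_apply, id_eq]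
    rw [show μ (r0 a) = 0 from hμ0 a, zero_add]
  have hHeq : ∀ z, H (μ + T.mulVec z) = βv + C.mulVec z := by
    intro z
    funext p
    have h1 : (fun b => (μ + T.mulVec z) (r0 b)) = A.mulVec z := hx0 z
    simp only [hH, Pi.add_apply]
    rw [show (fun b => μ (r0 b) + (T.mulVec z) (r0 b)) = A.mulVec z from h1,
      Matrix.mulVec_mulVec]
    simp only [hC, Matrix.sub_mulVec, hβv, Pi.add_apply, Pi.sub_apply]
    have h2 : (T.submatrix rs id).mulVec z p = T.mulVec z (rs p) := by
      simp [Matrix.mulVec, dotProduct, Matrix.submatrix_apply]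
    rw [h2]
    ring
  have hAOz : ∀ z, A.mulVec z = Q.mulVec ((O.mulVec z) ∘ Sum.inl) := by
    intro z
    have hUz : U.mulVec z = (O.mulVec z) ∘ Sum.inl := by
      funext a
      simp only [Function.comp_apply, Matrix.mulVec, dotProduct]
      exact Finset.sum_congr rfl (fun j _ => by rw [hOU a j])
    rw [← hQU, ← Matrix.mulVec_mulVec, hUz]
  have hCOz : ∀ z, C.mulVec z = D.mulVec ((O.mulVec z) ∘ Sum.inr) := by
    intro z
    have h1 : C = (C * Oᵀ) * O := by rw [Matrix.mul_assoc, hOtO, Matrix.mul_one]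
    conv_lhs => rw [h1, ← Matrix.mulVec_mulVec]
    set w := O.mulVec z with hw
    funext p
    have h2 : ∀ a : Fin k, (C * Oᵀ) p (Sum.inl a) = 0 := by
      intro a
      have h3 : (C * Oᵀ) p (Sum.inl a) = (C * Uᵀ) p a := by
        simp only [Matrix.mul_apply, Matrix.transpose_apply]
        exact Finset.sum_congr rfl (fun j _ => by rw [hOU a j])
      rw [h3, hCU]
      rfl
    simp only [Matrix.mulVec, dotProduct, Fintype.sum_sum_type]
    rw [Finset.sum_congr rfl (fun a _ => by rw [h2 a, zero_mul])]
    simp [hD, Function.comp]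
  -- event on the rotated space
  set V : Set ((Fin k ⊕ (Fin n × Fin k)) → ℝ) :=
    {w | R (Q.mulVec (w ∘ Sum.inl)) (βv + D.mulVec (w ∘ Sum.inr))
      > c (βv + D.mulVec (w ∘ Sum.inr))} with hV
  have hm1 : Measurable (fun w : (Fin k ⊕ (Fin n × Fin k)) → ℝ => Q.mulVec (w ∘ Sum.inl)) :=
    (aux_measurable_mulVec Q).comp (measurable_pi_lambda _ (fun a => measurable_pi_apply _))
  have hm2 : Measurable (fun w : (Fin k ⊕ (Fin n × Fin k)) → ℝ
      => βv + D.mulVec (w ∘ Sum.inr)) := by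
    refine measurable_pi_lambda _ (fun p => ?_)
    simp only [Pi.add_apply, Matrix.mulVec, dotProduct]
    refine Measurable.const_add ?_ _
    exact Finset.measurable_sum _
      (fun q _ => ((measurable_pi_apply (Sum.inr q)).comp measurable_id).const_mul _)
  have hVmeas : MeasurableSet V :=
    measurableSet_lt (hcm.comp hm2) (hR.comp (hm1.prodMk hm2))
  have hpre : (fun z => μ + T.mulVec z) ⁻¹' W = (fun z => O.mulVec z) ⁻¹' V := by
    ext z
    simp only [Set.mem_preimage, hW, hV, Set.mem_setOf_eq]
    rw [hx0 z, hHeq z, hAOz z, hCOz z]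
  have step4 : γI ((fun z => μ + T.mulVec z) ⁻¹' W) = γK V := by
    rw [hpre, ← Measure.map_apply (aux_measurable_mulVec O) hVmeas, hγI,
      aux_gaussian_pi_map_mulVec_rect (Fintype.equivOfCardEq hcard) O hOtO, hγK]
  -- split the product
  set Epair : Set ((Fin k → ℝ) × ((Fin n × Fin k) → ℝ)) :=
    {p | R (Q.mulVec p.1) (βv + D.mulVec p.2) > c (βv + D.mulVec p.2)} with hEpair
  have hm1' : Measurable (fun p : (Fin k → ℝ) × ((Fin n × Fin k) → ℝ) => Q.mulVec p.1) :=
    (aux_measurable_mulVec Q).comp measurable_fst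
  have hm2' : Measurable (fun p : (Fin k → ℝ) × ((Fin n × Fin k) → ℝ)
      => βv + D.mulVec p.2) := by
    refine measurable_pi_lambda _ (fun q => ?_)
    simp only [Pi.add_apply, Matrix.mulVec, dotProduct]
    refine Measurable.const_add ?_ _
    exact Finset.measurable_sum _
      (fun q' _ => ((measurable_pi_apply q').comp measurable_snd).const_mul _)
  have hEmeas : MeasurableSet Epair :=
    measurableSet_lt (hcm.comp hm2') (hR.comp (hm1'.prodMk hm2'))
  have hmp := measurePreserving_sumPiEquivProdPi
    (μ := fun _ : Fin k ⊕ (Fin n × Fin k) => gaussianReal 0 1)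
  have hVE : V = (MeasurableEquiv.sumPiEquivProdPi
      (fun _ : Fin k ⊕ (Fin n × Fin k) => ℝ)) ⁻¹' Epair := by
    ext w
    simp only [Set.mem_preimage, hV, hEpair, Set.mem_setOf_eq,
      MeasurableEquiv.sumPiEquivProdPi, MeasurableEquiv.coe_mk, Equiv.sumPiEquivProdPi]
    rfl
  have step5 : γK V = (γ1.prod γ2) Epair := by
    rw [hVE, hγK]
    exact hmp.measure_preimage hEmeas.nullMeasurableSet
  have step6 : (γ1.prod γ2) Epair
      = ∫⁻ w₂, γ1 {w₁ | R (Q.mulVec w₁) (βv + D.mulVec w₂)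
          > c (βv + D.mulVec w₂)} ∂γ2 := by
    rw [Measure.prod_apply_symm hEmeas]
    rfl
  have step7 : ∀ w₂ : (Fin n × Fin k) → ℝ,
      γ1 {w₁ | R (Q.mulVec w₁) (βv + D.mulVec w₂) > c (βv + D.mulVec w₂)}
        ≤ ENNReal.ofReal α := by
    intro w₂
    set hh := βv + D.mulVec w₂ with hhh
    have hRm : Measurable (fun ξ : Fin k → ℝ => R ξ hh) :=
      hR.comp (measurable_id.prodMk measurable_const)
    have hsetm : MeasurableSet {ξ : Fin k → ℝ | R ξ hh > c hh} :=
      measurableSet_lt measurable_const hRm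
    have h1 : {w₁ : Fin k → ℝ | R (Q.mulVec w₁) hh > c hh}
        = (fun w₁ => Q.mulVec w₁) ⁻¹' {ξ | R ξ hh > c hh} := rfl
    rw [h1, ← Measure.map_apply (aux_measurable_mulVec Q) hsetm, ← hν]
    have h2 := aux_quantile_bound ν (fun ξ => R ξ hh) hRm α hα (hfin hh).1 (hfin hh).2
    rwa [← hc hh] at h2
  calc P {ω | R (fun a => g ω (0, a)) (h ω) > c (h ω)}
      = ∫⁻ w₂, γ1 {w₁ | R (Q.mulVec w₁) (βv + D.mulVec w₂)
          > c (βv + D.mulVec w₂)} ∂γ2 := by rw [step2, step4, step5, step6]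
    _ ≤ ∫⁻ _, ENNReal.ofReal α ∂γ2 := lintegral_mono (fun w₂ => step7 w₂)
    _ = ENNReal.ofReal α := by
        rw [lintegral_const, measure_univ, mul_one]
end

section
/- Let Θ be a nonempty set with a distinguished point θ₀, let k ≥ 1, λ̄ ≥ 1 and C > 0. Consider triples (ξ, h, Σ) where ξ ∈ ℝ^k, h : Θ → ℝ^k satisfies h(θ₀) = 0, and Σ : Θ×Θ → ℝ^{k×k} is such that Σ(θ,θ) is symmetric with all eigenvalues in [1/λ̄, λ̄] for every θ ∈ Θ and ‖Σ(θ,θ̃)‖_op ≤ λ̄ for all θ,θ̃ ∈ Θ. Define g(θ) = h(θ) + Σ(θ,θ₀)Σ(θ₀,θ₀)^{-1}ξ and R(ξ,h,Σ) = ξ'Σ(θ₀,θ₀)^{-1}ξ − inf_{θ∈Θ} g(θ)'Σ(θ,θ)^{-1}g(θ). Then: (a) for every triple with ξ'Σ(θ₀,θ₀)^{-1}ξ ≤ C one has 0 ≤ R(ξ,h,Σ) ≤ C; and (b) there exists a constant K depending only on C, λ̄ and k such that for any two such triples (ξ₁,h₁,Σ₁), (ξ₂,h₂,Σ₂), each with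 ξ_i'Σ_i(θ₀,θ₀)^{-1}ξ_i ≤ C, |R(ξ₁,h₁,Σ₁) − R(ξ₂,h₂,Σ₂)| ≤ K (‖ξ₁−ξ₂‖ + sup_{θ∈Θ}‖h₁(θ)−h₂(θ)‖ + sup_{θ,θ̃∈Θ}‖Σ₁(θ,θ̃)−Σ₂(θ,θ̃)‖_op). -/
open Matrix

set_option maxHeartbeats 1000000

/-- Euclidean norm of a vector in `ℝ^k`. -/
noncomputable def euclNorm {k : ℕ} (x : Fin k → ℝ) : ℝ :=
  Real.sqrt (∑ i, x i ^ 2)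

/-- Euclidean operator norm of a `k×k` real matrix. -/
noncomputable def opNorm {k : ℕ} (A : Matrix (Fin k) (Fin k) ℝ) : ℝ :=
  sSup {r : ℝ | ∃ x : Fin k → ℝ, euclNorm x ≤ 1 ∧ r = euclNorm (A.mulVec x)}

/-- Quadratic form `x'Ax`. -/
noncomputable def quadForm {k : ℕ} (A : Matrix (Fin k) (Fin k) ℝ) (x : Fin k → ℝ) : ℝ :=
  x ⬝ᵥ A.mulVec x

/-- The QLR functional `R(ξ,h,Σ) = ξ'Σ(θ₀,θ₀)⁻¹ξ − inf_θ g(θ)'Σ(θ,θ)⁻¹g(θ)` where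
`g(θ) = h(θ) + Σ(θ,θ₀)Σ(θ₀,θ₀)⁻¹ξ`. -/
noncomputable def qlrStat {k : ℕ} {Θ : Type*} (θ₀ : Θ) (ξ : Fin k → ℝ)
    (h : Θ → Fin k → ℝ) (S : Θ → Θ → Matrix (Fin k) (Fin k) ℝ) : ℝ :=
  quadForm (S θ₀ θ₀)⁻¹ ξ -
    ⨅ θ : Θ, quadForm (S θ θ)⁻¹ (h θ + (S θ θ₀ * (S θ₀ θ₀)⁻¹).mulVec ξ)

/-- `Σ(θ,θ)` is symmetric with all eigenvalues in `[1/λ̄, λ̄]` for every `θ`, and all blocks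
`Σ(θ,θ̃)` have operator norm at most `λ̄`. -/
def covOK {k : ℕ} {Θ : Type*} (lam : ℝ) (S : Θ → Θ → Matrix (Fin k) (Fin k) ℝ) : Prop :=
  (∀ θ : Θ, ∃ hH : (S θ θ).IsHermitian, ∀ i, hH.eigenvalues i ∈ Set.Icc (1 / lam) lam) ∧
  (∀ θ θ' : Θ, opNorm (S θ θ') ≤ lam)

namespace QLR

variable {k : ℕ}

lemma en_nonneg (x : Fin k → ℝ) : 0 ≤ euclNorm x := Real.sqrt_nonneg _

lemma en_sq (x : Fin k → ℝ) : euclNorm x ^ 2 = ∑ i, x i ^ 2 :=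
  Real.sq_sqrt (Finset.sum_nonneg fun _ _ => sq_nonneg _)

lemma en_le_of_sq_le {a : ℝ} (x : Fin k → ℝ) (ha : 0 ≤ a)
    (h : euclNorm x ^ 2 ≤ a ^ 2) : euclNorm x ≤ a := by
  have := Real.sqrt_le_sqrt h
  rwa [Real.sqrt_sq (en_nonneg x), Real.sqrt_sq ha] at this

lemma dot_self_eq (x : Fin k → ℝ) : x ⬝ᵥ x = euclNorm x ^ 2 := by
  rw [en_sq]; simp [dotProduct, sq]

lemma abs_dot_le (x y : Fin k → ℝ) : |x ⬝ᵥ y| ≤ euclNorm x * euclNorm y := by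
  have h := Finset.sum_mul_sq_le_sq_mul_sq Finset.univ x y
  have h2 : (x ⬝ᵥ y) ^ 2 ≤ (euclNorm x * euclNorm y) ^ 2 := by
    rw [mul_pow, en_sq, en_sq]; simpa [dotProduct] using h
  have := Real.sqrt_le_sqrt h2
  rwa [Real.sqrt_sq_eq_abs, Real.sqrt_sq (mul_nonneg (en_nonneg x) (en_nonneg y))] at this

lemma dot_le (x y : Fin k → ℝ) : x ⬝ᵥ y ≤ euclNorm x * euclNorm y :=
  le_trans (le_abs_self _) (abs_dot_le x y)

lemma en_add_le (x y : Fin k → ℝ) : euclNorm (x + y) ≤ euclNorm x + euclNorm y := by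
  apply en_le_of_sq_le _ (add_nonneg (en_nonneg x) (en_nonneg y))
  have hxy := dot_le x y
  have h : euclNorm (x + y) ^ 2 = euclNorm x ^ 2 + 2 * (x ⬝ᵥ y) + euclNorm y ^ 2 := by
    rw [en_sq, en_sq, en_sq]
    simp only [Pi.add_apply, dotProduct, Finset.mul_sum, ← Finset.sum_add_distrib]
    congr 1; funext i; ring
  nlinarith [en_nonneg x, en_nonneg y]

lemma en_neg (x : Fin k → ℝ) : euclNorm (-x) = euclNorm x := by
  unfold euclNorm; congr 1; simp

lemma en_sub_comm (x y : Fin k → ℝ) : euclNorm (x - y) = euclNorm (y - x) := by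
  rw [← en_neg (x - y)]; congr 1; abel

lemma en_smul (c : ℝ) (x : Fin k → ℝ) : euclNorm (c • x) = |c| * euclNorm x := by
  unfold euclNorm
  rw [← Real.sqrt_sq_eq_abs, ← Real.sqrt_mul (sq_nonneg c)]
  congr 1
  rw [Finset.mul_sum]
  congr 1; funext i; simp [mul_pow]

lemma en_eq_zero {x : Fin k → ℝ} (h : euclNorm x = 0) : x = 0 := by
  have h2 : ∑ i, x i ^ 2 = 0 := by
    have := en_sq x
    rw [h] at this; simpa using this.symm
  funext i
  have := (Finset.sum_eq_zero_iff_of_nonneg (fun j _ => sq_nonneg (x j))).1 h2 i (Finset.mem_univ i)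
  exact pow_eq_zero_iff (by norm_num) |>.1 this


/-- Frobenius-type bound. -/
lemma mulVec_le_frob (A : Matrix (Fin k) (Fin k) ℝ) (x : Fin k → ℝ) :
    euclNorm (A.mulVec x) ≤ Real.sqrt (∑ i, ∑ j, A i j ^ 2) * euclNorm x := by
  have hF : (0:ℝ) ≤ Real.sqrt (∑ i, ∑ j, A i j ^ 2) := Real.sqrt_nonneg _
  apply en_le_of_sq_le _ (mul_nonneg hF (en_nonneg x))
  rw [mul_pow, Real.sq_sqrt (show (0:ℝ) ≤ ∑ i, ∑ j, A i j ^ 2 from Finset.sum_nonneg fun _ _ =>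
    Finset.sum_nonneg fun _ _ => sq_nonneg _), en_sq, en_sq]
  calc ∑ i, (A.mulVec x) i ^ 2
      ≤ ∑ i, (∑ j, A i j ^ 2) * ∑ j, x j ^ 2 := by
        apply Finset.sum_le_sum
        intro i _
        have := Finset.sum_mul_sq_le_sq_mul_sq Finset.univ (A i) x
        simpa [Matrix.mulVec, dotProduct] using this
    _ = (∑ i, ∑ j, A i j ^ 2) * ∑ j, x j ^ 2 := by rw [Finset.sum_mul]

lemma opNorm_set_nonempty (A : Matrix (Fin k) (Fin k) ℝ) :
    (0:ℝ) ∈ {r : ℝ | ∃ x : Fin k → ℝ, euclNorm x ≤ 1 ∧ r = euclNorm (A.mulVec x)} := by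
  refine ⟨0, ?_, ?_⟩
  · simp [euclNorm]
  · simp [euclNorm, Matrix.mulVec_zero]

lemma opNorm_bddAbove (A : Matrix (Fin k) (Fin k) ℝ) :
    BddAbove {r : ℝ | ∃ x : Fin k → ℝ, euclNorm x ≤ 1 ∧ r = euclNorm (A.mulVec x)} := by
  refine ⟨Real.sqrt (∑ i, ∑ j, A i j ^ 2), ?_⟩
  rintro r ⟨x, hx, rfl⟩
  calc euclNorm (A.mulVec x) ≤ Real.sqrt (∑ i, ∑ j, A i j ^ 2) * euclNorm x :=
        mulVec_le_frob A x
    _ ≤ Real.sqrt (∑ i, ∑ j, A i j ^ 2) * 1 := by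
        exact mul_le_mul_of_nonneg_left hx (Real.sqrt_nonneg _)
    _ = _ := mul_one _

lemma opNorm_nonneg (A : Matrix (Fin k) (Fin k) ℝ) : 0 ≤ opNorm A :=
  le_csSup (opNorm_bddAbove A) (opNorm_set_nonempty A)

lemma mulVec_le_opNorm (A : Matrix (Fin k) (Fin k) ℝ) (x : Fin k → ℝ) :
    euclNorm (A.mulVec x) ≤ opNorm A * euclNorm x := by
  rcases eq_or_lt_of_le (en_nonneg x) with h0 | hpos
  · rw [en_eq_zero h0.symm]
    simp only [Matrix.mulVec_zero]
    have : euclNorm (0 : Fin k → ℝ) = 0 := by simp [euclNorm]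
    rw [this, mul_zero]
  · set c := euclNorm x with hc
    have hne : c ≠ 0 := ne_of_gt hpos
    have hu : euclNorm (c⁻¹ • x) = 1 := by
      rw [en_smul, abs_of_pos (inv_pos.2 hpos), inv_mul_cancel₀ hne]
    have hmem : euclNorm (A.mulVec (c⁻¹ • x)) ∈
        {r : ℝ | ∃ x : Fin k → ℝ, euclNorm x ≤ 1 ∧ r = euclNorm (A.mulVec x)} :=
      ⟨c⁻¹ • x, le_of_eq hu, rfl⟩
    have hle : euclNorm (A.mulVec (c⁻¹ • x)) ≤ opNorm A :=
      le_csSup (opNorm_bddAbove A) hmem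
    have heq : euclNorm (A.mulVec (c⁻¹ • x)) = c⁻¹ * euclNorm (A.mulVec x) := by
      rw [Matrix.mulVec_smul, en_smul, abs_of_pos (inv_pos.2 hpos)]
    rw [heq] at hle
    calc euclNorm (A.mulVec x) = c * (c⁻¹ * euclNorm (A.mulVec x)) := by
          field_simp
      _ ≤ c * opNorm A := mul_le_mul_of_nonneg_left hle (le_of_lt hpos)
      _ = opNorm A * c := mul_comm _ _

lemma mulVec_le_of_op {A : Matrix (Fin k) (Fin k) ℝ} {L : ℝ} (hA : opNorm A ≤ L)
    (x : Fin k → ℝ) : euclNorm (A.mulVec x) ≤ L * euclNorm x :=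
  le_trans (mulVec_le_opNorm A x) (mul_le_mul_of_nonneg_right hA (en_nonneg x))


section UDU

variable (U : Matrix (Fin k) (Fin k) ℝ) (d : Fin k → ℝ)

lemma star_mat_eq (M : Matrix (Fin k) (Fin k) ℝ) : star M = Mᵀ := by
  rw [Matrix.star_eq_conjTranspose, Matrix.conjTranspose_eq_transpose_of_trivial]

lemma udu_quad (x : Fin k → ℝ) :
    quadForm (U * Matrix.diagonal d * star U) x
      = ∑ i, d i * ((star U).mulVec x) i ^ 2 := by
  unfold quadForm
  rw [← Matrix.mulVec_mulVec, ← Matrix.mulVec_mulVec, Matrix.dotProduct_mulVec]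
  have hv : x ᵥ* U = (star U).mulVec x := by
    rw [star_mat_eq, Matrix.mulVec_transpose]
  rw [hv, dotProduct]
  congr 1; funext i
  rw [Matrix.mulVec_diagonal]; ring

lemma udu_sum (hU : U * star U = 1) (x : Fin k → ℝ) :
    ∑ i, ((star U).mulVec x) i ^ 2 = ∑ i, x i ^ 2 := by
  have h1 : ∑ i, ((star U).mulVec x) i ^ 2 = ((star U).mulVec x) ⬝ᵥ ((star U).mulVec x) := by
    simp [dotProduct, sq]
  have h2 : ∑ i, x i ^ 2 = x ⬝ᵥ x := by simp [dotProduct, sq]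
  rw [h1, h2, Matrix.dotProduct_mulVec]
  congr 1
  rw [star_mat_eq, Matrix.vecMul_transpose, Matrix.mulVec_mulVec, ← star_mat_eq, hU,
    Matrix.one_mulVec]

lemma udu_quad_le {a b : ℝ} (hd : ∀ i, a ≤ d i ∧ d i ≤ b) (x : Fin k → ℝ)
    (hU : U * star U = 1) :
    a * euclNorm x ^ 2 ≤ quadForm (U * Matrix.diagonal d * star U) x ∧
    quadForm (U * Matrix.diagonal d * star U) x ≤ b * euclNorm x ^ 2 := by
  rw [udu_quad, en_sq, ← udu_sum U hU x, Finset.mul_sum, Finset.mul_sum]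
  constructor
  · apply Finset.sum_le_sum
    intro i _
    exact mul_le_mul_of_nonneg_right (hd i).1 (sq_nonneg _)
  · apply Finset.sum_le_sum
    intro i _
    exact mul_le_mul_of_nonneg_right (hd i).2 (sq_nonneg _)

lemma udu_transpose : (U * Matrix.diagonal d * star U)ᵀ = U * Matrix.diagonal d * star U := by
  rw [star_mat_eq, Matrix.transpose_mul, Matrix.transpose_mul, Matrix.transpose_transpose,
    Matrix.diagonal_transpose, Matrix.mul_assoc]

lemma udu_mul (d' : Fin k → ℝ) (hU : star U * U = 1) :
    (U * Matrix.diagonal d * star U) * (U * Matrix.diagonal d' * star U)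
      = U * Matrix.diagonal (fun i => d i * d' i) * star U := by
  have h1 : (U * Matrix.diagonal d * star U) * (U * Matrix.diagonal d' * star U)
      = U * (Matrix.diagonal d * ((star U * U) * (Matrix.diagonal d' * star U))) := by
    simp only [Matrix.mul_assoc]
  rw [h1, hU, Matrix.one_mul, ← Matrix.mul_assoc (Matrix.diagonal d),
    Matrix.diagonal_mul_diagonal, ← Matrix.mul_assoc]

lemma udu_mulVec_le {b : ℝ} (hb : 0 ≤ b) (hd : ∀ i, |d i| ≤ b)
    (hU : U * star U = 1) (hU' : star U * U = 1) (x : Fin k → ℝ) :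
    euclNorm ((U * Matrix.diagonal d * star U).mulVec x) ≤ b * euclNorm x := by
  set B := U * Matrix.diagonal d * star U with hB
  apply en_le_of_sq_le _ (mul_nonneg hb (en_nonneg x))
  have h1 : euclNorm (B.mulVec x) ^ 2 = quadForm (B * B) x := by
    rw [en_sq]
    have e1 : ∑ i, (B.mulVec x) i ^ 2 = (B.mulVec x) ⬝ᵥ (B.mulVec x) := by
      simp [dotProduct, sq]
    rw [e1, Matrix.dotProduct_mulVec, ← Matrix.mulVec_transpose]
    have e2 : Bᵀ = B := by rw [hB]; exact udu_transpose U d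
    rw [e2, Matrix.mulVec_mulVec, dotProduct_comm]
    rfl
  rw [h1, hB, udu_mul U d d hU']
  have h2 := (udu_quad_le U (fun i => d i * d i) (a := 0) (b := b ^ 2)
    (fun i => ⟨mul_self_nonneg _, by
      have := hd i
      calc d i * d i = |d i| * |d i| := (abs_mul_abs_self _).symm
        _ ≤ b * b := mul_le_mul this this (abs_nonneg _) hb
        _ = b ^ 2 := (sq b).symm⟩) x hU).2
  calc quadForm (U * Matrix.diagonal (fun i => d i * d i) * star U) x
      ≤ b ^ 2 * euclNorm x ^ 2 := h2
    _ = (b * euclNorm x) ^ 2 := by ring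

end UDU

/-- Spectral facts package for a Hermitian matrix with eigenvalues in `[1/λ, λ]`. -/
lemma spec_facts {lam : ℝ} (hlam : 1 ≤ lam) {N : Matrix (Fin k) (Fin k) ℝ}
    (hH : N.IsHermitian) (he : ∀ i, hH.eigenvalues i ∈ Set.Icc (1 / lam) lam) :
    N * N⁻¹ = 1 ∧ (∀ x, 0 ≤ quadForm N⁻¹ x) ∧
    (∀ x, quadForm N⁻¹ x ≤ lam * euclNorm x ^ 2) ∧
    (∀ x, euclNorm x ^ 2 ≤ lam * quadForm N⁻¹ x) ∧
    (∀ x, euclNorm (N⁻¹.mulVec x) ≤ lam * euclNorm x) := by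
  have hlam0 : (0:ℝ) < lam := lt_of_lt_of_le one_pos hlam
  set U : Matrix (Fin k) (Fin k) ℝ := (hH.eigenvectorUnitary : Matrix (Fin k) (Fin k) ℝ) with hUdef
  set d : Fin k → ℝ := hH.eigenvalues with hddef
  have hU : U * star U = 1 := Matrix.mem_unitaryGroup_iff.1 hH.eigenvectorUnitary.2
  have hU' : star U * U = 1 := Matrix.mem_unitaryGroup_iff'.1 hH.eigenvectorUnitary.2
  have hspec : N = U * Matrix.diagonal d * star U := by
    have := hH.spectral_theorem
    rwa [show (RCLike.ofReal ∘ hH.eigenvalues : Fin k → ℝ) = d by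
      funext i; simp [RCLike.ofReal_real_eq_id, hddef]] at this
  have hdpos : ∀ i, 0 < d i := fun i =>
    lt_of_lt_of_le (by positivity) (he i).1
  have hdinv : ∀ i, 1 / lam ≤ (d i)⁻¹ ∧ (d i)⁻¹ ≤ lam := by
    intro i
    constructor
    · rw [one_div]
      exact inv_anti₀ (hdpos i) (he i).2
    · have h1 : 1 / lam ≤ d i := (he i).1
      have := inv_anti₀ (by positivity : (0:ℝ) < 1 / lam) h1
      rwa [one_div, inv_inv] at this
  set M := U * Matrix.diagonal (fun i => (d i)⁻¹) * star U with hM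
  have hNM : N * M = 1 := by
    rw [hspec, hM, udu_mul U d _ hU']
    have : (fun i => d i * (d i)⁻¹) = fun _ => (1:ℝ) := by
      funext i; exact mul_inv_cancel₀ (ne_of_gt (hdpos i))
    rw [this, Matrix.diagonal_one, Matrix.mul_one, hU]
  have hinv : N⁻¹ = M := Matrix.inv_eq_right_inv hNM
  have hq := fun x => udu_quad_le U (fun i => (d i)⁻¹) hdinv x hU
  refine ⟨by rw [hinv]; exact hNM, ?_, ?_, ?_, ?_⟩
  · intro x
    rw [hinv]
    refine le_trans ?_ (hq x).1
    positivity
  · intro x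
    rw [hinv]; exact (hq x).2
  · intro x
    rw [hinv]
    have h1 := (hq x).1
    have h2 : euclNorm x ^ 2 = lam * ((1/lam) * euclNorm x ^ 2) := by
      field_simp
    rw [h2]
    exact mul_le_mul_of_nonneg_left h1 (le_of_lt hlam0)
  · intro x
    rw [hinv, hM]
    apply udu_mulVec_le U _ (le_of_lt hlam0) ?_ hU hU' x
    intro i
    rw [abs_of_pos (inv_pos.2 (hdpos i))]
    exact (hdinv i).2


lemma quad_sub_quad (M : Matrix (Fin k) (Fin k) ℝ) (u v : Fin k → ℝ) :
    quadForm M u - quadForm M v = u ⬝ᵥ M.mulVec (u - v) + (u - v) ⬝ᵥ M.mulVec v := by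
  unfold quadForm
  rw [Matrix.mulVec_sub, dotProduct_sub, sub_dotProduct]
  ring

lemma quad_diff {M : Matrix (Fin k) (Fin k) ℝ} {L : ℝ}
    (hM : ∀ z, euclNorm (M.mulVec z) ≤ L * euclNorm z) (u v : Fin k → ℝ) :
    quadForm M u - quadForm M v ≤ L * ((euclNorm u + euclNorm v) * euclNorm (u - v)) := by
  rw [quad_sub_quad]
  have h1 : u ⬝ᵥ M.mulVec (u - v) ≤ euclNorm u * (L * euclNorm (u - v)) :=
    le_trans (dot_le _ _) (mul_le_mul_of_nonneg_left (hM _) (en_nonneg u))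
  have h2 : (u - v) ⬝ᵥ M.mulVec v ≤ euclNorm (u - v) * (L * euclNorm v) :=
    le_trans (dot_le _ _) (mul_le_mul_of_nonneg_left (hM _) (en_nonneg _))
  nlinarith [h1, h2]

lemma quad_cross (M₁ M₂ : Matrix (Fin k) (Fin k) ℝ) (v : Fin k → ℝ) :
    quadForm M₁ v - quadForm M₂ v ≤ euclNorm v * euclNorm ((M₁ - M₂).mulVec v) := by
  have h : quadForm M₁ v - quadForm M₂ v = v ⬝ᵥ (M₁ - M₂).mulVec v := by
    unfold quadForm
    rw [Matrix.sub_mulVec, dotProduct_sub]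
  rw [h]
  exact dot_le _ _

lemma mulVec_neg_diff (A B : Matrix (Fin k) (Fin k) ℝ) (z : Fin k → ℝ) :
    euclNorm ((B - A).mulVec z) = euclNorm ((A - B).mulVec z) := by
  have : (B - A) = -(A - B) := by abel
  rw [this, Matrix.neg_mulVec, en_neg]

lemma inv_diff_bound {lam DS : ℝ} (hlam0 : 0 ≤ lam) (hDS0 : 0 ≤ DS)
    {N₁ N₂ : Matrix (Fin k) (Fin k) ℝ}
    (hr1 : N₁ * N₁⁻¹ = 1) (hr2 : N₂ * N₂⁻¹ = 1)
    (hp51 : ∀ x, euclNorm (N₁⁻¹.mulVec x) ≤ lam * euclNorm x)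
    (hp52 : ∀ x, euclNorm (N₂⁻¹.mulVec x) ≤ lam * euclNorm x)
    (hd : ∀ z, euclNorm ((N₁ - N₂).mulVec z) ≤ DS * euclNorm z)
    (v : Fin k → ℝ) :
    euclNorm ((N₁⁻¹ - N₂⁻¹).mulVec v) ≤ lam * (DS * (lam * euclNorm v)) := by
  have hl1 : N₁⁻¹ * N₁ = 1 := Matrix.nonsing_inv_mul _ (Matrix.isUnit_det_of_right_inverse hr1)
  have hid : N₁⁻¹ - N₂⁻¹ = N₁⁻¹ * ((N₂ - N₁) * N₂⁻¹) := by
    have : N₁⁻¹ * ((N₂ - N₁) * N₂⁻¹) = N₁⁻¹ * (N₂ * N₂⁻¹) - N₁⁻¹ * N₁ * N₂⁻¹ := by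
      rw [Matrix.sub_mul, Matrix.mul_sub, Matrix.mul_assoc]
    rw [this, hr2, hl1, Matrix.mul_one, Matrix.one_mul]
  rw [hid, ← Matrix.mulVec_mulVec, ← Matrix.mulVec_mulVec]
  calc euclNorm (N₁⁻¹.mulVec ((N₂ - N₁).mulVec (N₂⁻¹.mulVec v)))
      ≤ lam * euclNorm ((N₂ - N₁).mulVec (N₂⁻¹.mulVec v)) := hp51 _
    _ ≤ lam * (DS * euclNorm (N₂⁻¹.mulVec v)) := by
        apply mul_le_mul_of_nonneg_left _ hlam0
        rw [mulVec_neg_diff]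
        exact hd _
    _ ≤ lam * (DS * (lam * euclNorm v)) := by
        apply mul_le_mul_of_nonneg_left _ hlam0
        exact mul_le_mul_of_nonneg_left (hp52 v) hDS0

lemma le_of_forall_eps {a b : ℝ} (h : ∀ ε : ℝ, 0 < ε → ε ≤ 1 → a ≤ b + ε) : a ≤ b := by
  by_contra hab
  push_neg at hab
  set ε := min ((a - b) / 2) 1 with hε
  have hε0 : 0 < ε := lt_min (by linarith) one_pos
  have := h ε hε0 (min_le_right _ _)
  have h2 : ε ≤ (a - b) / 2 := min_le_left _ _
  linarith


/-- Core comparison of the two infima under small perturbations. -/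
lemma inf_le_inf_add {Θ : Type} [Nonempty Θ] (θ₀ : Θ) {lam C : ℝ}
    (hlam : 1 ≤ lam) (hC : 0 < C)
    (ξ₁ ξ₂ : Fin k → ℝ) (h₁ h₂ : Θ → Fin k → ℝ)
    (S₁ S₂ : Θ → Θ → Matrix (Fin k) (Fin k) ℝ)
    (hz1 : h₁ θ₀ = 0)
    (pack₁ : ∀ θ : Θ, (S₁ θ θ) * (S₁ θ θ)⁻¹ = 1 ∧ (∀ x, 0 ≤ quadForm (S₁ θ θ)⁻¹ x) ∧
      (∀ x, quadForm (S₁ θ θ)⁻¹ x ≤ lam * euclNorm x ^ 2) ∧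
      (∀ x, euclNorm x ^ 2 ≤ lam * quadForm (S₁ θ θ)⁻¹ x) ∧
      (∀ x, euclNorm ((S₁ θ θ)⁻¹.mulVec x) ≤ lam * euclNorm x))
    (pack₂ : ∀ θ : Θ, (S₂ θ θ) * (S₂ θ θ)⁻¹ = 1 ∧ (∀ x, 0 ≤ quadForm (S₂ θ θ)⁻¹ x) ∧
      (∀ x, quadForm (S₂ θ θ)⁻¹ x ≤ lam * euclNorm x ^ 2) ∧
      (∀ x, euclNorm x ^ 2 ≤ lam * quadForm (S₂ θ θ)⁻¹ x) ∧
      (∀ x, euclNorm ((S₂ θ θ)⁻¹.mulVec x) ≤ lam * euclNorm x))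
    (op₁ : ∀ θ θ' : Θ, opNorm (S₁ θ θ') ≤ lam)
    (hq1 : quadForm (S₁ θ₀ θ₀)⁻¹ ξ₁ ≤ C)
    (hB2 : euclNorm ξ₂ ≤ Real.sqrt (lam * C))
    (Dh DS : ℝ) (hDh : ∀ θ, euclNorm (h₁ θ - h₂ θ) ≤ Dh)
    (hDS : ∀ θ θ' : Θ, ∀ z, euclNorm ((S₁ θ θ' - S₂ θ θ').mulVec z) ≤ DS * euclNorm z)
    (hDS0 : 0 ≤ DS)
    (hD1 : euclNorm (ξ₁ - ξ₂) + Dh + DS ≤ 1) :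
    (⨅ θ : Θ, quadForm (S₂ θ θ)⁻¹ (h₂ θ + (S₂ θ θ₀ * (S₂ θ₀ θ₀)⁻¹).mulVec ξ₂)) ≤
    (⨅ θ : Θ, quadForm (S₁ θ θ)⁻¹ (h₁ θ + (S₁ θ θ₀ * (S₁ θ₀ θ₀)⁻¹).mulVec ξ₁)) +
      (lam * (2 * Real.sqrt (lam * (C + 1)) + (1 + lam ^ 2 + (lam ^ 3 + lam) * Real.sqrt (lam * C)))
          * (1 + lam ^ 2 + (lam ^ 3 + lam) * Real.sqrt (lam * C))
        + lam ^ 2 * Real.sqrt (lam * (C + 1)) ^ 2)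
      * (euclNorm (ξ₁ - ξ₂) + Dh + DS) := by
  have hlam0 : (0:ℝ) < lam := lt_of_lt_of_le one_pos hlam
  obtain ⟨B, hBdef⟩ : ∃ b : ℝ, Real.sqrt (lam * C) = b := ⟨_, rfl⟩
  obtain ⟨G, hGdef⟩ : ∃ g : ℝ, Real.sqrt (lam * (C + 1)) = g := ⟨_, rfl⟩
  rw [hBdef] at hB2
  rw [hBdef, hGdef]
  obtain ⟨c1, hc1def⟩ : ∃ c : ℝ, 1 + lam ^ 2 + (lam ^ 3 + lam) * B = c := ⟨_, rfl⟩
  rw [hc1def]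
  obtain ⟨c2, hc2def⟩ : ∃ c : ℝ, lam * (2 * G + c1) * c1 + lam ^ 2 * G ^ 2 = c := ⟨_, rfl⟩
  rw [hc2def]
  obtain ⟨Dx, hDxdef⟩ : ∃ dd : ℝ, euclNorm (ξ₁ - ξ₂) = dd := ⟨_, rfl⟩
  rw [hDxdef] at hD1 ⊢
  obtain ⟨D, hDdef⟩ : ∃ dd : ℝ, Dx + Dh + DS = dd := ⟨_, rfl⟩
  rw [hDdef] at hD1 ⊢
  have hDx0 : 0 ≤ Dx := hDxdef ▸ en_nonneg _
  have hDh0 : 0 ≤ Dh := le_trans (en_nonneg _) (hDh θ₀)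
  have hD0 : 0 ≤ D := by rw [← hDdef]; linarith
  have hDxD : Dx ≤ D := by rw [← hDdef]; linarith
  have hDhD : Dh ≤ D := by rw [← hDdef]; linarith
  have hDSD : DS ≤ D := by rw [← hDdef]; linarith
  have hB0 : 0 ≤ B := hBdef ▸ Real.sqrt_nonneg _
  have hG0 : 0 ≤ G := hGdef ▸ Real.sqrt_nonneg _
  have hc10 : 0 ≤ c1 := by rw [← hc1def]; positivity
  have hGsq : G ^ 2 = lam * (C + 1) := by
    rw [← hGdef]; exact Real.sq_sqrt (by positivity)
  have hBsq : B ^ 2 = lam * C := by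
    rw [← hBdef]; exact Real.sq_sqrt (by positivity)
  have hBnorm : euclNorm ξ₂ ≤ B := hB2
  set f₁ : Θ → ℝ := fun θ => quadForm (S₁ θ θ)⁻¹ (h₁ θ + (S₁ θ θ₀ * (S₁ θ₀ θ₀)⁻¹).mulVec ξ₁)
    with hf₁def
  set f₂ : Θ → ℝ := fun θ => quadForm (S₂ θ θ)⁻¹ (h₂ θ + (S₂ θ θ₀ * (S₂ θ₀ θ₀)⁻¹).mulVec ξ₂)
    with hf₂def
  have hbdd₁ : BddBelow (Set.range f₁) := by
    refine ⟨0, ?_⟩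
    rintro r ⟨θ, rfl⟩
    exact (pack₁ θ).2.1 _
  have hbdd₂ : BddBelow (Set.range f₂) := by
    refine ⟨0, ?_⟩
    rintro r ⟨θ, rfl⟩
    exact (pack₂ θ).2.1 _
  have hI1C : (⨅ θ, f₁ θ) ≤ C := by
    refine le_trans (ciInf_le hbdd₁ θ₀) ?_
    have : f₁ θ₀ = quadForm (S₁ θ₀ θ₀)⁻¹ ξ₁ := by
      rw [hf₁def]
      simp only [hz1, zero_add, (pack₁ θ₀).1, Matrix.one_mulVec]
    rw [this]; exact hq1
  apply le_of_forall_eps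
  intro ε hε0 hε1
  have hlt : (⨅ θ, f₁ θ) < (⨅ θ, f₁ θ) + ε := by linarith
  obtain ⟨θ, hθ⟩ := exists_lt_of_ciInf_lt hlt
  set P₁ : Matrix (Fin k) (Fin k) ℝ := (S₁ θ₀ θ₀)⁻¹ with hP₁
  set P₂ : Matrix (Fin k) (Fin k) ℝ := (S₂ θ₀ θ₀)⁻¹ with hP₂
  set v₁ : Fin k → ℝ := P₁.mulVec ξ₁ with hv₁
  set v₂ : Fin k → ℝ := P₂.mulVec ξ₂ with hv₂
  set w₁ : Fin k → ℝ := (S₁ θ θ₀).mulVec v₁ with hw₁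
  set w₂ : Fin k → ℝ := (S₂ θ θ₀).mulVec v₂ with hw₂
  set g₁ : Fin k → ℝ := h₁ θ + w₁ with hg₁
  set g₂ : Fin k → ℝ := h₂ θ + w₂ with hg₂
  have hfg₁ : f₁ θ = quadForm (S₁ θ θ)⁻¹ g₁ := by
    rw [hf₁def, hg₁, hw₁, hv₁, hP₁]
    simp only [Matrix.mulVec_mulVec]
  have hfg₂ : f₂ θ = quadForm (S₂ θ θ)⁻¹ g₂ := by
    rw [hf₂def, hg₂, hw₂, hv₂, hP₂]
    simp only [Matrix.mulVec_mulVec]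
  have hf1le : quadForm (S₁ θ θ)⁻¹ g₁ ≤ C + 1 := by
    rw [← hfg₁]
    have := le_of_lt hθ
    linarith
  have hg1norm : euclNorm g₁ ≤ G := by
    apply en_le_of_sq_le _ hG0
    rw [hGsq]
    calc euclNorm g₁ ^ 2 ≤ lam * quadForm (S₁ θ θ)⁻¹ g₁ := (pack₁ θ).2.2.2.1 g₁
      _ ≤ lam * (C + 1) := mul_le_mul_of_nonneg_left hf1le (le_of_lt hlam0)
  have hv2norm : euclNorm v₂ ≤ lam * B :=
    le_trans ((pack₂ θ₀).2.2.2.2 ξ₂) (mul_le_mul_of_nonneg_left hBnorm (le_of_lt hlam0))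
  have hinvdiff : euclNorm ((P₁ - P₂).mulVec ξ₂) ≤ lam * (DS * (lam * B)) := by
    have := inv_diff_bound (le_of_lt hlam0) hDS0 (pack₁ θ₀).1 (pack₂ θ₀).1
      (pack₁ θ₀).2.2.2.2 (pack₂ θ₀).2.2.2.2 (hDS θ₀ θ₀) ξ₂
    refine le_trans this ?_
    have h1 : lam * euclNorm ξ₂ ≤ lam * B := mul_le_mul_of_nonneg_left hBnorm (le_of_lt hlam0)
    have h2 : DS * (lam * euclNorm ξ₂) ≤ DS * (lam * B) := mul_le_mul_of_nonneg_left h1 hDS0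
    exact mul_le_mul_of_nonneg_left h2 (le_of_lt hlam0)
  have hdv : euclNorm (v₁ - v₂) ≤ lam * Dx + lam * (DS * (lam * B)) := by
    have hid : v₁ - v₂ = P₁.mulVec (ξ₁ - ξ₂) + (P₁ - P₂).mulVec ξ₂ := by
      rw [hv₁, hv₂, Matrix.mulVec_sub, Matrix.sub_mulVec]; abel
    rw [hid]
    refine le_trans (en_add_le _ _) ?_
    have h1 : euclNorm (P₁.mulVec (ξ₁ - ξ₂)) ≤ lam * Dx := by
      rw [← hDxdef]
      exact (pack₁ θ₀).2.2.2.2 _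
    linarith [hinvdiff]
  have hdw : euclNorm (w₁ - w₂) ≤ lam * (lam * Dx + lam * (DS * (lam * B))) + DS * (lam * B) := by
    have hid : w₁ - w₂ = (S₁ θ θ₀).mulVec (v₁ - v₂) + (S₁ θ θ₀ - S₂ θ θ₀).mulVec v₂ := by
      rw [hw₁, hw₂, Matrix.mulVec_sub, Matrix.sub_mulVec]; abel
    rw [hid]
    refine le_trans (en_add_le _ _) ?_
    have h1 : euclNorm ((S₁ θ θ₀).mulVec (v₁ - v₂)) ≤ lam * euclNorm (v₁ - v₂) :=
      mulVec_le_of_op (op₁ θ θ₀) _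
    have h3 : lam * euclNorm (v₁ - v₂) ≤ lam * (lam * Dx + lam * (DS * (lam * B))) :=
      mul_le_mul_of_nonneg_left hdv (le_of_lt hlam0)
    have h4 : DS * euclNorm v₂ ≤ DS * (lam * B) := mul_le_mul_of_nonneg_left hv2norm hDS0
    linarith [hDS θ θ₀ v₂]
  have hdg : euclNorm (g₁ - g₂) ≤ c1 * D := by
    have hid : g₁ - g₂ = (h₁ θ - h₂ θ) + (w₁ - w₂) := by rw [hg₁, hg₂]; abel
    rw [hid, ← hc1def]
    refine le_trans (en_add_le _ _) ?_
    have h1 := hDh θ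
    nlinarith [hdw, mul_le_mul_of_nonneg_left hDxD (sq_nonneg lam),
      mul_le_mul_of_nonneg_left hDSD (mul_nonneg (le_of_lt hlam0) hB0),
      mul_le_mul_of_nonneg_left hDSD (mul_nonneg (by positivity : (0:ℝ) ≤ lam ^ 3 + lam) hB0)]
  have hdgc1 : euclNorm (g₁ - g₂) ≤ c1 := by
    refine le_trans hdg ?_
    calc c1 * D ≤ c1 * 1 := mul_le_mul_of_nonneg_left hD1 hc10
      _ = c1 := mul_one _
  have hg2norm : euclNorm g₂ ≤ G + c1 := by
    have hgg : g₂ = g₁ + (g₂ - g₁) := by abel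
    rw [hgg]
    refine le_trans (en_add_le _ _) ?_
    rw [en_sub_comm]
    linarith [hdgc1, hg1norm]
  have t1 : quadForm (S₂ θ θ)⁻¹ g₂ - quadForm (S₂ θ θ)⁻¹ g₁ ≤
      lam * ((2 * G + c1) * (c1 * D)) := by
    refine le_trans (quad_diff (pack₂ θ).2.2.2.2 g₂ g₁) ?_
    apply mul_le_mul_of_nonneg_left _ (le_of_lt hlam0)
    have hsum : euclNorm g₂ + euclNorm g₁ ≤ 2 * G + c1 := by linarith
    have hsub : euclNorm (g₂ - g₁) ≤ c1 * D := by rw [en_sub_comm]; exact hdg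
    exact mul_le_mul hsum hsub (en_nonneg _) (by positivity)
  have t2 : quadForm (S₂ θ θ)⁻¹ g₁ - quadForm (S₁ θ θ)⁻¹ g₁ ≤ lam ^ 2 * G ^ 2 * D := by
    refine le_trans (quad_cross _ _ g₁) ?_
    have hinv2 : euclNorm (((S₂ θ θ)⁻¹ - (S₁ θ θ)⁻¹).mulVec g₁) ≤
        lam * (DS * (lam * euclNorm g₁)) := by
      apply inv_diff_bound (le_of_lt hlam0) hDS0 (pack₂ θ).1 (pack₁ θ).1
        (pack₂ θ).2.2.2.2 (pack₁ θ).2.2.2.2 _ g₁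
      intro z
      rw [mulVec_neg_diff]
      exact hDS θ θ z
    have i1 : lam * euclNorm g₁ ≤ lam * G := mul_le_mul_of_nonneg_left hg1norm (le_of_lt hlam0)
    have i2 : DS * (lam * euclNorm g₁) ≤ D * (lam * G) :=
      mul_le_mul hDSD i1 (mul_nonneg (le_of_lt hlam0) (en_nonneg _)) hD0
    have i3 : lam * (DS * (lam * euclNorm g₁)) ≤ lam * (D * (lam * G)) :=
      mul_le_mul_of_nonneg_left i2 (le_of_lt hlam0)
    have i4 : euclNorm g₁ * euclNorm (((S₂ θ θ)⁻¹ - (S₁ θ θ)⁻¹).mulVec g₁) ≤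
        G * (lam * (D * (lam * G))) :=
      mul_le_mul hg1norm (le_trans hinv2 i3) (en_nonneg _)
        hG0
    refine le_trans i4 (le_of_eq ?_)
    ring
  have hkey : f₂ θ ≤ f₁ θ + c2 * D := by
    rw [hfg₁, hfg₂]
    have hc2D : lam * ((2 * G + c1) * (c1 * D)) + lam ^ 2 * G ^ 2 * D = c2 * D := by
      rw [← hc2def]; ring
    linarith [t1, t2]
  have hI2 : (⨅ θ', f₂ θ') ≤ f₂ θ := ciInf_le hbdd₂ θ
  calc (⨅ θ', f₂ θ') ≤ f₂ θ := hI2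
    _ ≤ f₁ θ + c2 * D := hkey
    _ ≤ (⨅ θ', f₁ θ') + ε + c2 * D := by linarith [le_of_lt hθ]
    _ = (⨅ θ', f₁ θ') + c2 * D + ε := by ring


lemma top_bound {lam DS B Dx : ℝ} (hlam0 : 0 < lam) (hDS0 : 0 ≤ DS) (hB0 : 0 ≤ B)
    (hDx0 : 0 ≤ Dx) {P P' : Matrix (Fin k) (Fin k) ℝ} {ξ ξ' : Fin k → ℝ}
    (hp5 : ∀ x, euclNorm (P.mulVec x) ≤ lam * euclNorm x)
    (hdiff : euclNorm ((P - P').mulVec ξ') ≤ lam * (DS * (lam * euclNorm ξ')))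
    (hξ : euclNorm ξ ≤ B) (hξ' : euclNorm ξ' ≤ B) (hΔ : euclNorm (ξ - ξ') ≤ Dx) :
    quadForm P ξ - quadForm P' ξ' ≤ 2 * lam * B * Dx + lam ^ 2 * B ^ 2 * DS := by
  have d1 := quad_diff hp5 ξ ξ'
  have d2 := quad_cross P P' ξ'
  have i1 : lam * ((euclNorm ξ + euclNorm ξ') * euclNorm (ξ - ξ')) ≤ lam * ((B + B) * Dx) := by
    apply mul_le_mul_of_nonneg_left _ (le_of_lt hlam0)
    exact mul_le_mul (by linarith) hΔ (en_nonneg _) (by linarith)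
  have inner : lam * (DS * (lam * euclNorm ξ')) ≤ lam * (DS * (lam * B)) := by
    apply mul_le_mul_of_nonneg_left _ (le_of_lt hlam0)
    apply mul_le_mul_of_nonneg_left _ hDS0
    exact mul_le_mul_of_nonneg_left hξ' (le_of_lt hlam0)
  have i2 : euclNorm ξ' * euclNorm ((P - P').mulVec ξ') ≤ B * (lam * (DS * (lam * B))) :=
    mul_le_mul hξ' (le_trans hdiff inner) (en_nonneg _) hB0
  have heq : lam * ((B + B) * Dx) + B * (lam * (DS * (lam * B)))
      = 2 * lam * B * Dx + lam ^ 2 * B ^ 2 * DS := by ring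
  linarith

lemma part_a {Θ : Type} [Nonempty Θ] (θ₀ : Θ) {lam C : ℝ} (hC : 0 < C)
    (ξ : Fin k → ℝ) (h : Θ → Fin k → ℝ) (S : Θ → Θ → Matrix (Fin k) (Fin k) ℝ)
    (hz : h θ₀ = 0)
    (pack : ∀ θ : Θ, (S θ θ) * (S θ θ)⁻¹ = 1 ∧ (∀ x, 0 ≤ quadForm (S θ θ)⁻¹ x) ∧
      (∀ x, quadForm (S θ θ)⁻¹ x ≤ lam * euclNorm x ^ 2) ∧
      (∀ x, euclNorm x ^ 2 ≤ lam * quadForm (S θ θ)⁻¹ x) ∧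
      (∀ x, euclNorm ((S θ θ)⁻¹.mulVec x) ≤ lam * euclNorm x))
    (hq : quadForm (S θ₀ θ₀)⁻¹ ξ ≤ C) :
    0 ≤ qlrStat θ₀ ξ h S ∧ qlrStat θ₀ ξ h S ≤ C := by
  unfold qlrStat
  set f : Θ → ℝ := fun θ => quadForm (S θ θ)⁻¹ (h θ + (S θ θ₀ * (S θ₀ θ₀)⁻¹).mulVec ξ)
    with hfdef
  have hbdd : BddBelow (Set.range f) := by
    refine ⟨0, ?_⟩
    rintro r ⟨θ, rfl⟩
    exact (pack θ).2.1 _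
  have hI0 : 0 ≤ ⨅ θ, f θ := le_ciInf fun θ => (pack θ).2.1 _
  have hIT : (⨅ θ, f θ) ≤ quadForm (S θ₀ θ₀)⁻¹ ξ := by
    refine le_trans (ciInf_le hbdd θ₀) ?_
    have : f θ₀ = quadForm (S θ₀ θ₀)⁻¹ ξ := by
      rw [hfdef]
      simp only [hz, zero_add, (pack θ₀).1, Matrix.one_mulVec]
    rw [this]
  constructor
  · linarith
  · linarith

end QLR

open QLR

/-- **Lemma 2: the QLR functional is bounded and Lipschitz.**  On the set of triples
`(ξ,h,Σ)` with `h(θ₀) = 0`, eigenvalues of `Σ(θ,θ)` in `[1/λ̄,λ̄]`, `‖Σ(θ,θ̃)‖_op ≤ λ̄`, and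
`ξ'Σ(θ₀,θ₀)⁻¹ξ ≤ C`: (a) `0 ≤ R(ξ,h,Σ) ≤ C`; (b) there is a constant `K = K(C,λ̄,k)` such
that `|R(ξ₁,h₁,Σ₁) − R(ξ₂,h₂,Σ₂)| ≤ K(‖ξ₁−ξ₂‖ + sup_θ‖h₁(θ)−h₂(θ)‖ + sup‖Σ₁−Σ₂‖_op)`. -/
theorem stmt_5 (k : ℕ) (hk : 1 ≤ k) (lam C : ℝ) (hlam : 1 ≤ lam) (hC : 0 < C) :
    ∃ K : ℝ, ∀ (Θ : Type) [Nonempty Θ], ∀ (θ₀ : Θ)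
      (ξ₁ ξ₂ : Fin k → ℝ) (h₁ h₂ : Θ → Fin k → ℝ)
      (S₁ S₂ : Θ → Θ → Matrix (Fin k) (Fin k) ℝ),
      h₁ θ₀ = 0 → h₂ θ₀ = 0 → covOK lam S₁ → covOK lam S₂ →
      quadForm (S₁ θ₀ θ₀)⁻¹ ξ₁ ≤ C → quadForm (S₂ θ₀ θ₀)⁻¹ ξ₂ ≤ C →
      (0 ≤ qlrStat θ₀ ξ₁ h₁ S₁ ∧ qlrStat θ₀ ξ₁ h₁ S₁ ≤ C) ∧
      (∀ Dh DS : ℝ, (∀ θ, euclNorm (h₁ θ - h₂ θ) ≤ Dh) →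
        (∀ θ θ', opNorm (S₁ θ θ' - S₂ θ θ') ≤ DS) →
        |qlrStat θ₀ ξ₁ h₁ S₁ - qlrStat θ₀ ξ₂ h₂ S₂| ≤
          K * (euclNorm (ξ₁ - ξ₂) + Dh + DS)) := by
  have hlam0 : (0:ℝ) < lam := lt_of_lt_of_le one_pos hlam
  refine ⟨C + (lam * (2 * Real.sqrt (lam * (C + 1)) +
      (1 + lam ^ 2 + (lam ^ 3 + lam) * Real.sqrt (lam * C)))
      * (1 + lam ^ 2 + (lam ^ 3 + lam) * Real.sqrt (lam * C))
      + lam ^ 2 * Real.sqrt (lam * (C + 1)) ^ 2)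
      + (2 * lam * Real.sqrt (lam * C) + lam ^ 2 * Real.sqrt (lam * C) ^ 2), ?_⟩
  intro Θ _ θ₀ ξ₁ ξ₂ h₁ h₂ S₁ S₂ hz1 hz2 cov₁ cov₂ hq1 hq2
  have pack₁ : ∀ θ : Θ, (S₁ θ θ) * (S₁ θ θ)⁻¹ = 1 ∧ (∀ x, 0 ≤ quadForm (S₁ θ θ)⁻¹ x) ∧
      (∀ x, quadForm (S₁ θ θ)⁻¹ x ≤ lam * euclNorm x ^ 2) ∧
      (∀ x, euclNorm x ^ 2 ≤ lam * quadForm (S₁ θ θ)⁻¹ x) ∧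
      (∀ x, euclNorm ((S₁ θ θ)⁻¹.mulVec x) ≤ lam * euclNorm x) := by
    intro θ
    obtain ⟨hH, hb⟩ := cov₁.1 θ
    exact spec_facts hlam hH hb
  have pack₂ : ∀ θ : Θ, (S₂ θ θ) * (S₂ θ θ)⁻¹ = 1 ∧ (∀ x, 0 ≤ quadForm (S₂ θ θ)⁻¹ x) ∧
      (∀ x, quadForm (S₂ θ θ)⁻¹ x ≤ lam * euclNorm x ^ 2) ∧
      (∀ x, euclNorm x ^ 2 ≤ lam * quadForm (S₂ θ θ)⁻¹ x) ∧
      (∀ x, euclNorm ((S₂ θ θ)⁻¹.mulVec x) ≤ lam * euclNorm x) := by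
    intro θ
    obtain ⟨hH, hb⟩ := cov₂.1 θ
    exact spec_facts hlam hH hb
  have hP1 := part_a θ₀ hC ξ₁ h₁ S₁ hz1 pack₁ hq1
  have hP2 := part_a θ₀ hC ξ₂ h₂ S₂ hz2 pack₂ hq2
  refine ⟨hP1, ?_⟩
  intro Dh DS hDh hDSop
  -- opaque constants
  obtain ⟨B, hBdef⟩ : ∃ b : ℝ, Real.sqrt (lam * C) = b := ⟨_, rfl⟩
  obtain ⟨G, hGdef⟩ : ∃ g : ℝ, Real.sqrt (lam * (C + 1)) = g := ⟨_, rfl⟩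
  rw [hBdef, hGdef]
  obtain ⟨c1, hc1def⟩ : ∃ c : ℝ, 1 + lam ^ 2 + (lam ^ 3 + lam) * B = c := ⟨_, rfl⟩
  rw [hc1def]
  obtain ⟨c2, hc2def⟩ : ∃ c : ℝ, lam * (2 * G + c1) * c1 + lam ^ 2 * G ^ 2 = c := ⟨_, rfl⟩
  rw [hc2def]
  obtain ⟨c3, hc3def⟩ : ∃ c : ℝ, 2 * lam * B + lam ^ 2 * B ^ 2 = c := ⟨_, rfl⟩
  rw [hc3def]
  obtain ⟨Dx, hDxdef⟩ : ∃ dd : ℝ, euclNorm (ξ₁ - ξ₂) = dd := ⟨_, rfl⟩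
  rw [hDxdef]
  obtain ⟨D, hDdef⟩ : ∃ dd : ℝ, Dx + Dh + DS = dd := ⟨_, rfl⟩
  rw [hDdef]
  have hB0 : 0 ≤ B := hBdef ▸ Real.sqrt_nonneg _
  have hG0 : 0 ≤ G := hGdef ▸ Real.sqrt_nonneg _
  have hc10 : 0 ≤ c1 := by rw [← hc1def]; positivity
  have hc20 : 0 ≤ c2 := by
    rw [← hc2def]
    have : 0 ≤ 2 * G + c1 := by linarith
    positivity
  have hc30 : 0 ≤ c3 := by rw [← hc3def]; positivity
  have hDx0 : 0 ≤ Dx := hDxdef ▸ en_nonneg _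
  have hDh0 : 0 ≤ Dh := le_trans (en_nonneg _) (hDh θ₀)
  have hDS0 : 0 ≤ DS := le_trans (opNorm_nonneg _) (hDSop θ₀ θ₀)
  have hD0 : 0 ≤ D := by rw [← hDdef]; linarith
  have hDxD : Dx ≤ D := by rw [← hDdef]; linarith
  have hDSD : DS ≤ D := by rw [← hDdef]; linarith
  have hBsq : B ^ 2 = lam * C := by rw [← hBdef]; exact Real.sq_sqrt (by positivity)
  -- norm bounds on ξ
  have hB1 : euclNorm ξ₁ ≤ B := by
    apply en_le_of_sq_le _ hB0
    rw [hBsq]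
    calc euclNorm ξ₁ ^ 2 ≤ lam * quadForm (S₁ θ₀ θ₀)⁻¹ ξ₁ := (pack₁ θ₀).2.2.2.1 ξ₁
      _ ≤ lam * C := mul_le_mul_of_nonneg_left hq1 (le_of_lt hlam0)
  have hB2 : euclNorm ξ₂ ≤ B := by
    apply en_le_of_sq_le _ hB0
    rw [hBsq]
    calc euclNorm ξ₂ ^ 2 ≤ lam * quadForm (S₂ θ₀ θ₀)⁻¹ ξ₂ := (pack₂ θ₀).2.2.2.1 ξ₂
      _ ≤ lam * C := mul_le_mul_of_nonneg_left hq2 (le_of_lt hlam0)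
  have hDSz : ∀ θ θ' : Θ, ∀ z, euclNorm ((S₁ θ θ' - S₂ θ θ').mulVec z) ≤ DS * euclNorm z :=
    fun θ θ' z => le_trans (mulVec_le_opNorm _ z)
      (mul_le_mul_of_nonneg_right (hDSop θ θ') (en_nonneg z))
  have hDSz' : ∀ θ θ' : Θ, ∀ z, euclNorm ((S₂ θ θ' - S₁ θ θ').mulVec z) ≤ DS * euclNorm z := by
    intro θ θ' z
    rw [mulVec_neg_diff]
    exact hDSz θ θ' z
  have hDh' : ∀ θ, euclNorm (h₂ θ - h₁ θ) ≤ Dh := by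
    intro θ
    rw [en_sub_comm]
    exact hDh θ
  by_cases hcase : Dx + Dh + DS ≤ 1
  · -- Lipschitz regime
    rw [hDdef] at hcase
    have hcase1 : euclNorm (ξ₁ - ξ₂) + Dh + DS ≤ 1 := by rw [hDxdef, hDdef]; exact hcase
    have hcase2 : euclNorm (ξ₂ - ξ₁) + Dh + DS ≤ 1 := by
      rw [en_sub_comm, hDxdef, hDdef]; exact hcase
    have dir1 := inf_le_inf_add θ₀ hlam hC ξ₁ ξ₂ h₁ h₂ S₁ S₂ hz1 pack₁ pack₂ cov₁.2 hq1
      (hBdef ▸ hB2) Dh DS hDh hDSz hDS0 hcase1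
    have dir2 := inf_le_inf_add θ₀ hlam hC ξ₂ ξ₁ h₂ h₁ S₂ S₁ hz2 pack₂ pack₁ cov₂.2 hq2
      (hBdef ▸ hB1) Dh DS hDh' hDSz' hDS0 hcase2
    rw [hBdef, hGdef, hc1def, hc2def, hDxdef, hDdef] at dir1
    rw [en_sub_comm ξ₂ ξ₁] at dir2
    rw [hBdef, hGdef, hc1def, hc2def, hDxdef, hDdef] at dir2
    -- top difference
    have hinv12 : euclNorm (((S₁ θ₀ θ₀)⁻¹ - (S₂ θ₀ θ₀)⁻¹).mulVec ξ₂) ≤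
        lam * (DS * (lam * euclNorm ξ₂)) :=
      inv_diff_bound (le_of_lt hlam0) hDS0 (pack₁ θ₀).1 (pack₂ θ₀).1
        (pack₁ θ₀).2.2.2.2 (pack₂ θ₀).2.2.2.2 (hDSz θ₀ θ₀) ξ₂
    have hinv21 : euclNorm (((S₂ θ₀ θ₀)⁻¹ - (S₁ θ₀ θ₀)⁻¹).mulVec ξ₁) ≤
        lam * (DS * (lam * euclNorm ξ₁)) :=
      inv_diff_bound (le_of_lt hlam0) hDS0 (pack₂ θ₀).1 (pack₁ θ₀).1
        (pack₂ θ₀).2.2.2.2 (pack₁ θ₀).2.2.2.2 (hDSz' θ₀ θ₀) ξ₁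
    have hΔ1 : euclNorm (ξ₁ - ξ₂) ≤ Dx := le_of_eq hDxdef
    have hΔ2 : euclNorm (ξ₂ - ξ₁) ≤ Dx := by rw [en_sub_comm]; exact le_of_eq hDxdef
    have top1 : quadForm (S₁ θ₀ θ₀)⁻¹ ξ₁ - quadForm (S₂ θ₀ θ₀)⁻¹ ξ₂ ≤
        2 * lam * B * Dx + lam ^ 2 * B ^ 2 * DS :=
      top_bound hlam0 hDS0 hB0 hDx0 (pack₁ θ₀).2.2.2.2 hinv12 hB1 hB2 hΔ1
    have top2 : quadForm (S₂ θ₀ θ₀)⁻¹ ξ₂ - quadForm (S₁ θ₀ θ₀)⁻¹ ξ₁ ≤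
        2 * lam * B * Dx + lam ^ 2 * B ^ 2 * DS :=
      top_bound hlam0 hDS0 hB0 hDx0 (pack₂ θ₀).2.2.2.2 hinv21 hB2 hB1 hΔ2
    have htopc3 : 2 * lam * B * Dx + lam ^ 2 * B ^ 2 * DS ≤ c3 * D := by
      rw [← hc3def]
      nlinarith [mul_le_mul_of_nonneg_left hDxD (by positivity : (0:ℝ) ≤ 2 * lam * B),
        mul_le_mul_of_nonneg_left hDSD (by positivity : (0:ℝ) ≤ lam ^ 2 * B ^ 2)]
    -- assemble
    unfold qlrStat
    rw [abs_sub_le_iff]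
    constructor
    · have := dir2
      nlinarith [top1, htopc3, mul_nonneg (le_of_lt hC) hD0]
    · have := dir1
      nlinarith [top2, htopc3, mul_nonneg (le_of_lt hC) hD0]
  · -- bounded regime: D > 1
    push_neg at hcase
    have hD1 : 1 < D := by rw [← hDdef]; exact hcase
    obtain ⟨ha1, ha2⟩ := hP1
    obtain ⟨hb1, hb2⟩ := hP2
    rw [abs_sub_le_iff]
    constructor
    · nlinarith [mul_nonneg hc20 hD0, mul_nonneg hc30 hD0]
    · nlinarith [mul_nonneg hc20 hD0, mul_nonneg hc30 hD0]
end

section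
/- Let Θ ⊆ ℝ^q be compact with θ₀ ∈ Θ, let m : ℝ^q → ℝ^k be twice continuously differentiable on an open neighborhood of Θ with m(θ) = 0 for θ ∈ Θ if and only if θ = θ₀, and suppose the Jacobian M = Dm(θ₀) (a k×q matrix) has rank q. Let Σ : Θ → ℝ^{k×k} assign to each θ a symmetric matrix with all eigenvalues in [1/λ̄, λ̄] for some λ̄ ≥ 1. Fix 0 ≤ α < 1/2 and γ with (1/2)(1/2 − α) < γ < 1/2 − α, and set δ_T = T^{−γ}, m_T(θ) = T^{1/2−α} m(θ), M_T = T^{1/2−α} M. Then as T → ∞ along the positive integers: (i) inf_{θ∈Θ, ‖θ−θ₀‖>δ_T} m_T(θ)'Σ(θ)^{-1}m_T(θ) → ∞; (ii) sup_{θ∈Θ, ‖θ−θ₀‖≤δ_T} ‖m_T(θ) − M_T(θ−θ₀)‖ → 0; and (iii) δ_T² · λ_min(M_T'Σ(θ₀)^{-1}M_T) → ∞. -/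
open Matrix Filter

/-- Minimal eigenvalue of a symmetric matrix, via the Rayleigh quotient:
`λ_min(A) = inf {x'Ax : ‖x‖ = 1}`. -/
noncomputable def minEig {q : ℕ} (A : Matrix (Fin q) (Fin q) ℝ) : ℝ :=
  sInf {r : ℝ | ∃ x : Fin q → ℝ, euclNorm x = 1 ∧ r = x ⬝ᵥ A.mulVec x}

lemma euclNorm_eq {n : ℕ} (x : Fin n → ℝ) :
    euclNorm x = ‖(WithLp.equiv 2 (Fin n → ℝ)).symm x‖ := by
  rw [EuclideanSpace.norm_eq]
  simp [euclNorm, Real.norm_eq_abs, sq_abs]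

lemma euclNorm_nonneg {n : ℕ} (x : Fin n → ℝ) : 0 ≤ euclNorm x :=
  Real.sqrt_nonneg _

lemma euclNorm_sq {n : ℕ} (x : Fin n → ℝ) : euclNorm x ^ 2 = ∑ i, x i ^ 2 :=
  Real.sq_sqrt (Finset.sum_nonneg fun _ _ => sq_nonneg _)

lemma euclNorm_smul {n : ℕ} (c : ℝ) (x : Fin n → ℝ) :
    euclNorm (c • x) = |c| * euclNorm x := by
  rw [euclNorm_eq, euclNorm_eq,
    show (WithLp.equiv 2 (Fin n → ℝ)).symm (c • x)
      = c • (WithLp.equiv 2 (Fin n → ℝ)).symm x from rfl, norm_smul, Real.norm_eq_abs]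

lemma euclNorm_pos {n : ℕ} {x : Fin n → ℝ} (hx : x ≠ 0) : 0 < euclNorm x := by
  rw [euclNorm_eq]
  rw [norm_pos_iff]
  simp only [ne_eq]
  intro h
  apply hx
  have := congrArg (WithLp.equiv 2 (Fin n → ℝ)) h
  simpa using this

lemma euclNorm_triangle {n : ℕ} (x y : Fin n → ℝ) :
    euclNorm (x + y) ≤ euclNorm x + euclNorm y := by
  rw [euclNorm_eq, euclNorm_eq, euclNorm_eq]
  rw [show (WithLp.equiv 2 (Fin n → ℝ)).symm (x + y)
      = (WithLp.equiv 2 (Fin n → ℝ)).symm x + (WithLp.equiv 2 (Fin n → ℝ)).symm y from rfl]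
  exact norm_add_le _ _

lemma euclNorm_neg {n : ℕ} (x : Fin n → ℝ) : euclNorm (-x) = euclNorm x := by
  rw [euclNorm_eq, euclNorm_eq,
    show (WithLp.equiv 2 (Fin n → ℝ)).symm (-x)
      = -((WithLp.equiv 2 (Fin n → ℝ)).symm x) from rfl, norm_neg]

@[simp] lemma euclNorm_zero {n : ℕ} : euclNorm (0 : Fin n → ℝ) = 0 := by
  simp [euclNorm]

lemma pi_norm_le_euclNorm {n : ℕ} (x : Fin n → ℝ) : ‖x‖ ≤ euclNorm x := by
  rcases Nat.eq_zero_or_pos n with h | h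
  · subst h; simp [euclNorm, Subsingleton.elim x 0]
  · apply pi_norm_le_iff_of_nonneg (euclNorm_nonneg x) |>.mpr
    intro i
    rw [Real.norm_eq_abs, ← Real.sqrt_sq_eq_abs]
    exact Real.sqrt_le_sqrt (Finset.single_le_sum (f := fun j => x j ^ 2)
      (fun j _ => sq_nonneg _) (Finset.mem_univ i))

lemma euclNorm_le_sqrt_mul {n : ℕ} (x : Fin n → ℝ) :
    euclNorm x ≤ Real.sqrt n * ‖x‖ := by
  have h1 : ∑ i, x i ^ 2 ≤ (n : ℝ) * ‖x‖ ^ 2 := by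
    calc ∑ i, x i ^ 2 ≤ ∑ _i : Fin n, ‖x‖ ^ 2 := by
          refine Finset.sum_le_sum fun i _ => ?_
          have := norm_le_pi_norm x i
          have h0 : (0:ℝ) ≤ ‖x i‖ := norm_nonneg _
          rw [Real.norm_eq_abs] at this
          nlinarith [abs_nonneg (x i), sq_abs (x i), abs_nonneg (norm x)]
      _ = (n : ℝ) * ‖x‖ ^ 2 := by simp [Finset.sum_const, mul_comm]
  calc euclNorm x ≤ Real.sqrt ((n : ℝ) * ‖x‖ ^ 2) := Real.sqrt_le_sqrt h1
    _ = Real.sqrt n * ‖x‖ := by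
        rw [Real.sqrt_mul (Nat.cast_nonneg n), Real.sqrt_sq (norm_nonneg _)]

lemma continuous_euclNorm {n : ℕ} : Continuous (euclNorm (k := n)) := by
  unfold euclNorm
  fun_prop

set_option maxHeartbeats 2000000

lemma quad_lower {k : ℕ} (lam : ℝ) (hlam : 1 ≤ lam) (S : Matrix (Fin k) (Fin k) ℝ)
    (hH : S.IsHermitian) (hev : ∀ i, hH.eigenvalues i ∈ Set.Icc (1/lam) lam)
    (y : Fin k → ℝ) :
    (1/lam) * ∑ i, y i ^ 2 ≤ y ⬝ᵥ S⁻¹.mulVec y := by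
  have hlam0 : (0:ℝ) < lam := lt_of_lt_of_le one_pos hlam
  set U : Matrix (Fin k) (Fin k) ℝ := (hH.eigenvectorUnitary : Matrix (Fin k) (Fin k) ℝ) with hU
  set μ : Fin k → ℝ := hH.eigenvalues with hμ
  have hμpos : ∀ i, 0 < μ i := fun i =>
    lt_of_lt_of_le (by positivity) (hev i).1
  have hμle : ∀ i, μ i ≤ lam := fun i => (hev i).2
  have hUU : U * star U = 1 := (Matrix.mem_unitaryGroup_iff).mp hH.eigenvectorUnitary.2
  have hUU' : star U * U = 1 := (Matrix.mem_unitaryGroup_iff').mp hH.eigenvectorUnitary.2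
  have hspec : S = U * Matrix.diagonal μ * star U := by
    have := hH.spectral_theorem
    simpa using this
  have hSinv : S⁻¹ = U * Matrix.diagonal (fun i => (μ i)⁻¹) * star U := by
    apply Matrix.inv_eq_right_inv
    rw [hspec]
    calc U * Matrix.diagonal μ * star U * (U * Matrix.diagonal (fun i => (μ i)⁻¹) * star U)
        = U * (Matrix.diagonal μ * ((star U * U) * (Matrix.diagonal (fun i => (μ i)⁻¹) * star U))) := by
          simp only [Matrix.mul_assoc]
      _ = 1 := by
          rw [hUU', one_mul, ← Matrix.mul_assoc (Matrix.diagonal μ), Matrix.diagonal_mul_diagonal]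
          have h9 : (fun i => μ i * (μ i)⁻¹) = fun _ => (1:ℝ) := by
            funext i; exact mul_inv_cancel₀ (hμpos i).ne'
          rw [h9, Matrix.diagonal_one, Matrix.one_mul]; exact hUU
  set z : Fin k → ℝ := Uᵀ.mulVec y with hz
  have hstarU : star U = Uᵀ := by
    ext i j; simp [Matrix.star_apply]
  have hval : y ⬝ᵥ S⁻¹.mulVec y = ∑ i, (μ i)⁻¹ * z i ^ 2 := by
    rw [hSinv, hstarU]
    rw [show (U * Matrix.diagonal (fun i => (μ i)⁻¹) * Uᵀ).mulVec y
        = U.mulVec ((Matrix.diagonal (fun i => (μ i)⁻¹)).mulVec (Uᵀ.mulVec y)) by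
      rw [Matrix.mulVec_mulVec, Matrix.mulVec_mulVec]]
    rw [Matrix.dotProduct_mulVec, ← Matrix.mulVec_transpose]
    simp only [Matrix.mulVec_diagonal, dotProduct, hz, sq]
    exact Finset.sum_congr rfl fun i _ => by ring
  have hsum : ∑ i, y i ^ 2 = ∑ i, z i ^ 2 := by
    have h1 : z ⬝ᵥ z = y ⬝ᵥ y := by
      rw [hz]
      rw [show Uᵀ.mulVec y ⬝ᵥ Uᵀ.mulVec y
          = y ⬝ᵥ (U * Uᵀ).mulVec y by
        rw [← Matrix.mulVec_mulVec, Matrix.dotProduct_mulVec, ← Matrix.mulVec_transpose,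
          Matrix.transpose_transpose]
        exact dotProduct_comm _ _]
      rw [← hstarU, hUU]
      rw [Matrix.one_mulVec]
    simpa [dotProduct, sq] using h1.symm
  rw [hval, hsum, Finset.mul_sum]
  refine Finset.sum_le_sum fun i _ => ?_
  have h1 : 1/lam ≤ (μ i)⁻¹ := by
    rw [one_div]
    exact inv_anti₀ (hμpos i) (hμle i)
  exact mul_le_mul_of_nonneg_right h1 (sq_nonneg _)

/-- **Verification of the strong-identification Assumption 5 (i)–(iii) for smooth GMM
(Section 4.2).**  For `m` twice continuously differentiable on a neighborhood of the compact
`Θ`, vanishing on `Θ` exactly at `θ₀`, with full-rank Jacobian `M` at `θ₀`; covariances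
`Σ(θ)` symmetric with eigenvalues in `[1/λ̄,λ̄]` on `Θ`; `m_T = T^{1/2−α} m`,
`M_T = T^{1/2−α} M`, `δ_T = T^{−γ}`, and `(1/2)(1/2−α) < γ < 1/2−α`:
(i) `inf_{θ∈Θ, ‖θ−θ₀‖>δ_T} m_T(θ)'Σ(θ)⁻¹m_T(θ) → ∞`;
(ii) `sup_{θ∈Θ, ‖θ−θ₀‖≤δ_T} ‖m_T(θ) − M_T(θ−θ₀)‖ → 0`;
(iii) `δ_T² λ_min(M_T'Σ(θ₀)⁻¹M_T) → ∞`. -/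
theorem stmt_11 {q k : ℕ} (hq : 1 ≤ q) (hk : 1 ≤ k)
    (Θ : Set (Fin q → ℝ)) (hΘ : IsCompact Θ) (θ₀ : Fin q → ℝ) (hθ₀ : θ₀ ∈ Θ)
    (m : (Fin q → ℝ) → (Fin k → ℝ))
    (V : Set (Fin q → ℝ)) (hV : IsOpen V) (hΘV : Θ ⊆ V)
    (hsm : ContDiffOn ℝ 2 m V)
    (hzero : ∀ θ ∈ Θ, (m θ = 0 ↔ θ = θ₀))
    (M : Matrix (Fin k) (Fin q) ℝ)
    (hM : M = LinearMap.toMatrix'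
      ((fderiv ℝ m θ₀ : (Fin q → ℝ) →L[ℝ] (Fin k → ℝ)) : (Fin q → ℝ) →ₗ[ℝ] (Fin k → ℝ)))
    (hrank : M.rank = q)
    (S : (Fin q → ℝ) → Matrix (Fin k) (Fin k) ℝ) (lam : ℝ) (hlam : 1 ≤ lam)
    (hSH : ∀ θ ∈ Θ, ∃ hH : (S θ).IsHermitian,
      ∀ i, hH.eigenvalues i ∈ Set.Icc (1 / lam) lam)
    (α γ : ℝ) (hα0 : 0 ≤ α) (hα : α < 1 / 2)
    (hγ1 : (1 / 2) * (1 / 2 - α) < γ) (hγ2 : γ < 1 / 2 - α) :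
    -- (i)
    (∀ B : ℝ, ∃ T₀ : ℕ, ∀ T : ℕ, T₀ ≤ T → ∀ θ ∈ Θ, (T : ℝ) ^ (-γ) < euclNorm (θ - θ₀) →
      B ≤ ((T : ℝ) ^ ((1 : ℝ) / 2 - α) • m θ) ⬝ᵥ
            (S θ)⁻¹.mulVec ((T : ℝ) ^ ((1 : ℝ) / 2 - α) • m θ)) ∧
    -- (ii)
    (∀ ε : ℝ, 0 < ε → ∃ T₀ : ℕ, ∀ T : ℕ, T₀ ≤ T → ∀ θ ∈ Θ,
      euclNorm (θ - θ₀) ≤ (T : ℝ) ^ (-γ) →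
      euclNorm ((T : ℝ) ^ ((1 : ℝ) / 2 - α) • m θ -
        ((T : ℝ) ^ ((1 : ℝ) / 2 - α) • M).mulVec (θ - θ₀)) ≤ ε) ∧
    -- (iii)
    Tendsto (fun T : ℕ => ((T : ℝ) ^ (-γ)) ^ 2 *
        minEig (((T : ℝ) ^ ((1 : ℝ) / 2 - α) • M)ᵀ * (S θ₀)⁻¹ *
          ((T : ℝ) ^ ((1 : ℝ) / 2 - α) • M)))
      atTop atTop := by
  have hlam0 : (0:ℝ) < lam := lt_of_lt_of_le one_pos hlam
  have hm0 : m θ₀ = 0 := (hzero θ₀ hθ₀).mpr rfl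
  have hθ₀V : θ₀ ∈ V := hΘV hθ₀
  have hγ0 : 0 < γ := lt_trans (by nlinarith) hγ1
  set L : (Fin q → ℝ) →L[ℝ] (Fin k → ℝ) := fderiv ℝ m θ₀ with hL
  have hMv : ∀ v, M.mulVec v = L v := by
    intro v
    have h1 : Matrix.toLin' M = (L : (Fin q → ℝ) →ₗ[ℝ] (Fin k → ℝ)) := by
      rw [hM, Matrix.toLin'_toMatrix']
    calc M.mulVec v = Matrix.toLin' M v := (Matrix.toLin'_apply _ _).symm
      _ = L v := by rw [h1]; rfl
  -- antilipschitz constant for M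
  have hker : LinearMap.ker M.mulVecLin = ⊥ := by
    have h2 := LinearMap.finrank_range_add_finrank_ker M.mulVecLin
    have h1 : Module.finrank ℝ (LinearMap.range M.mulVecLin) = q := hrank
    rw [h1, Module.finrank_pi] at h2
    simp only [Fintype.card_fin] at h2
    have h3 : Module.finrank ℝ (LinearMap.ker M.mulVecLin) = 0 := by omega
    exact Submodule.finrank_eq_zero.mp h3
  obtain ⟨K, hK0, hKa⟩ := LinearMap.exists_antilipschitzWith M.mulVecLin hker
  have hanti : ∀ v : Fin q → ℝ, ‖v‖ ≤ K * ‖M.mulVec v‖ := by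
    intro v
    have h1 := hKa.le_mul_dist v 0
    simpa [dist_eq_norm, Matrix.mulVecLin_apply] using h1
  have hK0' : (0:ℝ) < K := hK0
  have hsq : (0:ℝ) < Real.sqrt q := Real.sqrt_pos.mpr (by exact_mod_cast Nat.lt_of_lt_of_le Nat.zero_lt_one hq)
  set σ : ℝ := (Real.sqrt q * K)⁻¹ with hσ
  have hσpos : 0 < σ := by positivity
  have hMlow : ∀ v : Fin q → ℝ, σ * euclNorm v ≤ euclNorm (M.mulVec v) := by
    intro v
    have h1 : euclNorm v ≤ Real.sqrt q * ‖v‖ := euclNorm_le_sqrt_mul v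
    have h2 := hanti v
    have h3 : ‖M.mulVec v‖ ≤ euclNorm (M.mulVec v) := pi_norm_le_euclNorm _
    have h4 : euclNorm v ≤ (Real.sqrt q * K) * euclNorm (M.mulVec v) := by
      calc euclNorm v ≤ Real.sqrt q * ‖v‖ := h1
        _ ≤ Real.sqrt q * (K * ‖M.mulVec v‖) := by
            exact mul_le_mul_of_nonneg_left h2 (Real.sqrt_nonneg _)
        _ ≤ (Real.sqrt q * K) * euclNorm (M.mulVec v) := by
            rw [mul_assoc]
            exact mul_le_mul_of_nonneg_left
              (mul_le_mul_of_nonneg_left h3 (le_of_lt hK0')) (Real.sqrt_nonneg _)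
    have h5 : σ * euclNorm v ≤ σ * ((Real.sqrt q * K) * euclNorm (M.mulVec v)) :=
      mul_le_mul_of_nonneg_left h4 (le_of_lt hσpos)
    calc σ * euclNorm v ≤ σ * ((Real.sqrt q * K) * euclNorm (M.mulVec v)) := h5
      _ = euclNorm (M.mulVec v) := by
          rw [← mul_assoc, hσ, inv_mul_cancel₀ (by positivity), one_mul]
  -- Taylor estimate
  have hcd2 : ContDiffAt ℝ 2 m θ₀ := hsm.contDiffAt (hV.mem_nhds hθ₀V)
  have hcd1 : ContDiffAt ℝ 1 (fderiv ℝ m) θ₀ := hcd2.fderiv_right (by norm_num)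
  obtain ⟨K₂, t, ht, hlip⟩ := hcd1.exists_lipschitzOnWith
  have htV : t ∩ V ∈ nhds θ₀ := Filter.inter_mem ht (hV.mem_nhds hθ₀V)
  obtain ⟨ε₀, hε₀, hball⟩ := Metric.mem_nhds_iff.mp htV
  have hθ₀t : θ₀ ∈ t ∩ V := hball (Metric.mem_ball_self hε₀)
  have htay : ∀ θ : Fin q → ℝ, ‖θ - θ₀‖ < ε₀ →
      ‖m θ - M.mulVec (θ - θ₀)‖ ≤ K₂ * ‖θ - θ₀‖ * ‖θ - θ₀‖ := by
    intro θ hθ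
    have hseg : segment ℝ θ₀ θ ⊆ Metric.ball θ₀ ε₀ :=
      (convex_ball θ₀ ε₀).segment_subset (Metric.mem_ball_self hε₀)
        (by simpa [Metric.mem_ball, dist_eq_norm] using hθ)
    have hsub : segment ℝ θ₀ θ ⊆ t ∩ V := fun y hy => hball (hseg hy)
    have hsegnorm : ∀ y ∈ segment ℝ θ₀ θ, ‖y - θ₀‖ ≤ ‖θ - θ₀‖ := by
      intro y hy
      rw [segment_eq_image'] at hy
      obtain ⟨s, hs, rfl⟩ := hy
      simp only [add_sub_cancel_left]
      rw [norm_smul, Real.norm_eq_abs, abs_of_nonneg hs.1]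
      nlinarith [norm_nonneg (θ - θ₀), hs.2, hs.1]
    have hder : ∀ y ∈ segment ℝ θ₀ θ, HasFDerivWithinAt (fun x => m x - L (x - θ₀))
        (fderiv ℝ m y - L) (segment ℝ θ₀ θ) y := by
      intro y hy
      have hyV : y ∈ V := (hsub hy).2
      have hdm : HasFDerivAt m (fderiv ℝ m y) y :=
        ((hsm.contDiffAt (hV.mem_nhds hyV)).differentiableAt (by norm_num)).hasFDerivAt
      have hla : HasFDerivAt (fun x : Fin q → ℝ => L (x - θ₀)) L y := by
        have h1 : (fun x : Fin q → ℝ => L (x - θ₀)) = fun x => L x - L θ₀ := by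
          funext x; rw [map_sub]
        rw [h1]
        exact L.hasFDerivAt.sub_const (L θ₀)
      exact (hdm.sub hla).hasFDerivWithinAt
    have hbound : ∀ y ∈ segment ℝ θ₀ θ, ‖fderiv ℝ m y - L‖ ≤ K₂ * ‖θ - θ₀‖ := by
      intro y hy
      have h1 := hlip.dist_le_mul y ((hsub hy).1) θ₀ hθ₀t.1
      rw [dist_eq_norm, dist_eq_norm] at h1
      calc ‖fderiv ℝ m y - L‖ ≤ (K₂ : ℝ) * ‖y - θ₀‖ := h1
        _ ≤ (K₂ : ℝ) * ‖θ - θ₀‖ :=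
            mul_le_mul_of_nonneg_left (hsegnorm y hy) K₂.coe_nonneg
    have hmvt := (convex_segment θ₀ θ).norm_image_sub_le_of_norm_hasFDerivWithin_le hder hbound
      (left_mem_segment ℝ θ₀ θ) (right_mem_segment ℝ θ₀ θ)
    simp only [sub_self, map_zero, hm0, sub_zero, zero_sub, norm_neg] at hmvt
    rw [hMv]
    exact hmvt
  -- local lower bound
  set Kk : ℝ := Real.sqrt k * K₂ with hKk
  have hKk0 : 0 ≤ Kk := by positivity
  set ε₁ : ℝ := min (ε₀/2) (σ / (2 * Kk + 1)) with hε₁def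
  have hε₁pos : 0 < ε₁ := lt_min (by linarith) (by positivity)
  have hε₁ε₀ : ε₁ < ε₀ := lt_of_le_of_lt (min_le_left _ _) (by linarith)
  have hresid : ∀ θ : Fin q → ℝ, ‖θ - θ₀‖ < ε₀ →
      euclNorm (m θ - M.mulVec (θ - θ₀)) ≤ Kk * (euclNorm (θ - θ₀) * euclNorm (θ - θ₀)) := by
    intro θ hθ
    have hpn : ‖θ - θ₀‖ ≤ euclNorm (θ - θ₀) := pi_norm_le_euclNorm _
    have h0e : 0 ≤ euclNorm (θ - θ₀) := euclNorm_nonneg _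
    have ht1 := htay θ hθ
    calc euclNorm (m θ - M.mulVec (θ - θ₀))
        ≤ Real.sqrt k * ‖m θ - M.mulVec (θ - θ₀)‖ := euclNorm_le_sqrt_mul _
      _ ≤ Real.sqrt k * (K₂ * ‖θ - θ₀‖ * ‖θ - θ₀‖) :=
          mul_le_mul_of_nonneg_left ht1 (Real.sqrt_nonneg _)
      _ ≤ Kk * (euclNorm (θ - θ₀) * euclNorm (θ - θ₀)) := by
          rw [hKk]
          have h2 : ‖θ - θ₀‖ * ‖θ - θ₀‖ ≤ euclNorm (θ - θ₀) * euclNorm (θ - θ₀) :=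
            mul_le_mul hpn hpn (norm_nonneg _) h0e
          nlinarith [Real.sqrt_nonneg (k:ℝ), K₂.coe_nonneg, norm_nonneg (θ - θ₀)]
  have hloc : ∀ θ : Fin q → ℝ, euclNorm (θ - θ₀) ≤ ε₁ →
      σ/2 * euclNorm (θ - θ₀) ≤ euclNorm (m θ) := by
    intro θ hθ
    have hpn : ‖θ - θ₀‖ ≤ euclNorm (θ - θ₀) := pi_norm_le_euclNorm _
    have h0e : 0 ≤ euclNorm (θ - θ₀) := euclNorm_nonneg _
    have hlt : ‖θ - θ₀‖ < ε₀ := lt_of_le_of_lt (hpn.trans hθ) hε₁ε₀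
    have hres := hresid θ hlt
    have hMl := hMlow (θ - θ₀)
    have htri : euclNorm (M.mulVec (θ - θ₀))
        ≤ euclNorm (m θ - M.mulVec (θ - θ₀)) + euclNorm (m θ) := by
      have h1 := euclNorm_triangle (M.mulVec (θ - θ₀) - m θ) (m θ)
      rw [sub_add_cancel] at h1
      calc euclNorm (M.mulVec (θ - θ₀))
          ≤ euclNorm (M.mulVec (θ - θ₀) - m θ) + euclNorm (m θ) := h1
        _ = euclNorm (m θ - M.mulVec (θ - θ₀)) + euclNorm (m θ) := by
            rw [← euclNorm_neg (M.mulVec (θ - θ₀) - m θ), neg_sub]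
    have hKke : Kk * euclNorm (θ - θ₀) ≤ σ/2 := by
      have h2 : euclNorm (θ - θ₀) ≤ σ / (2*Kk+1) := hθ.trans (min_le_right _ _)
      have h3 : (0:ℝ) < 2*Kk+1 := by linarith
      have h4 : Kk * (σ / (2*Kk+1)) ≤ σ/2 := by
        rw [← mul_div_assoc, div_le_div_iff₀ h3 two_pos]
        nlinarith [hσpos.le, hKk0]
      calc Kk * euclNorm (θ - θ₀) ≤ Kk * (σ / (2*Kk+1)) := mul_le_mul_of_nonneg_left h2 hKk0
        _ ≤ σ/2 := h4
    nlinarith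
  -- global lower bound
  have hglob : ∃ b : ℝ, 0 < b ∧ ∀ θ ∈ Θ, ε₁ ≤ euclNorm (θ - θ₀) → b ≤ euclNorm (m θ) := by
    have hclosed : IsClosed {θ : Fin q → ℝ | ε₁ ≤ euclNorm (θ - θ₀)} :=
      isClosed_le continuous_const (continuous_euclNorm.comp (by continuity))
    have hKcpt : IsCompact (Θ ∩ {θ | ε₁ ≤ euclNorm (θ - θ₀)}) := hΘ.inter_right hclosed
    rcases (Θ ∩ {θ | ε₁ ≤ euclNorm (θ - θ₀)}).eq_empty_or_nonempty with h | h
    · refine ⟨1, one_pos, fun θ hθ hθ' => absurd (show θ ∈ Θ ∩ {θ | ε₁ ≤ euclNorm (θ - θ₀)}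
        from ⟨hθ, hθ'⟩) (by simp [h])⟩
    · have hcont : ContinuousOn (fun θ => euclNorm (m θ)) (Θ ∩ {θ | ε₁ ≤ euclNorm (θ - θ₀)}) :=
        continuous_euclNorm.comp_continuousOn
          ((hsm.continuousOn).mono (fun x hx => hΘV hx.1))
      obtain ⟨θs, hθs, hmin⟩ := hKcpt.exists_isMinOn h hcont
      refine ⟨euclNorm (m θs), ?_, fun θ hθ hθ' => isMinOn_iff.mp hmin θ ⟨hθ, hθ'⟩⟩
      apply euclNorm_pos
      intro hmz
      have hts : θs = θ₀ := (hzero θs hθs.1).mp hmz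
      have h2 := hθs.2
      rw [hts] at h2
      simp only [Set.mem_setOf_eq, sub_self, euclNorm_zero] at h2
      linarith
  -- growth lemmas
  have hpow : ∀ e : ℝ, 0 < e → ∀ C : ℝ, 0 < C →
      Tendsto (fun T : ℕ => C * (T:ℝ) ^ e) atTop atTop := by
    intro e he C hC
    exact ((tendsto_rpow_atTop he).comp tendsto_natCast_atTop_atTop).const_mul_atTop hC
  have hpow0 : ∀ e : ℝ, e < 0 → Tendsto (fun T : ℕ => (T:ℝ) ^ e) atTop (nhds 0) := by
    intro e he
    have h1 := tendsto_rpow_neg_atTop (y := -e) (by linarith)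
    have h2 := h1.comp tendsto_natCast_atTop_atTop
    simpa [Function.comp_def] using h2
  have he₁ : 0 < 1 - 2*α - 2*γ := by linarith
  have he₂ : 1/2 - α - 2*γ < 0 := by linarith
  refine ⟨?_, ?_, ?_⟩
  -- (i)
  · intro B
    obtain ⟨b, hb0, hbb⟩ := hglob
    have h1 := hpow (1 - 2*α - 2*γ) he₁ ((1/lam) * (σ/2)^2) (by positivity)
    have h2 := hpow (1 - 2*α) (by linarith) ((1/lam) * b^2) (by positivity)
    have h3 := hpow0 (-γ) (by linarith)
    obtain ⟨T₀, hT₀⟩ := Filter.eventually_atTop.mp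
      ((((h1.eventually_ge_atTop B).and (h2.eventually_ge_atTop B)).and
        (h3.eventually_lt_const hε₁pos)).and (eventually_ge_atTop 1))
    refine ⟨T₀, fun T hT θ hθ hgt => ?_⟩
    obtain ⟨⟨⟨hB1, hB2⟩, hδε⟩, hT1⟩ := hT₀ T hT
    have hT0 : (0:ℝ) < T := by exact_mod_cast Nat.lt_of_lt_of_le Nat.zero_lt_one hT1
    set c : ℝ := (T:ℝ)^((1:ℝ)/2 - α) with hc
    have hc0 : 0 ≤ c := Real.rpow_nonneg hT0.le _
    obtain ⟨hH, hevθ⟩ := hSH θ hθ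
    have hquad := quad_lower lam hlam (S θ) hH hevθ (m θ)
    rw [← euclNorm_sq] at hquad
    have hval : (c • m θ) ⬝ᵥ (S θ)⁻¹.mulVec (c • m θ)
        = c^2 * (m θ ⬝ᵥ (S θ)⁻¹.mulVec (m θ)) := by
      rw [Matrix.mulVec_smul, smul_dotProduct, dotProduct_smul]
      simp only [smul_eq_mul]; ring
    rw [hval]
    have hc2 : c^2 = (T:ℝ)^(1 - 2*α) := by
      rw [hc, sq, ← Real.rpow_add hT0]; ring_nf
    have hδ0 : 0 ≤ (T:ℝ)^(-γ) := Real.rpow_nonneg hT0.le _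
    have hquad' : c^2 * ((1/lam) * euclNorm (m θ)^2) ≤ c^2 * (m θ ⬝ᵥ (S θ)⁻¹.mulVec (m θ)) :=
      mul_le_mul_of_nonneg_left hquad (sq_nonneg c)
    rcases le_or_gt (euclNorm (θ - θ₀)) ε₁ with hcase | hcase
    · have hl := hloc θ hcase
      have hge : σ/2 * (T:ℝ)^(-γ) ≤ euclNorm (m θ) := by
        have := mul_le_mul_of_nonneg_left hgt.le (le_of_lt (by positivity : (0:ℝ) < σ/2))
        linarith
      have hsq' : (σ/2 * (T:ℝ)^(-γ))^2 ≤ euclNorm (m θ)^2 :=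
        pow_le_pow_left₀ (by positivity) hge 2
      have hstep : (1/lam) * (σ/2)^2 * (T:ℝ)^(1 - 2*α - 2*γ)
          ≤ c^2 * ((1/lam) * euclNorm (m θ)^2) := by
        have hd2 : (T:ℝ)^(1 - 2*α - 2*γ) = (T:ℝ)^(1-2*α) * ((T:ℝ)^(-γ))^2 := by
          rw [sq, ← Real.rpow_add hT0, ← Real.rpow_add hT0]; ring_nf
        rw [hd2, hc2]
        have h6 : (1/lam) * (σ/2 * (T:ℝ)^(-γ))^2 ≤ (1/lam) * euclNorm (m θ)^2 :=
          mul_le_mul_of_nonneg_left hsq' (by positivity)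
        have h7 : 0 ≤ (T:ℝ)^(1-2*α) := Real.rpow_nonneg hT0.le _
        calc (1/lam) * (σ/2)^2 * ((T:ℝ)^(1-2*α) * ((T:ℝ)^(-γ))^2)
            = (T:ℝ)^(1-2*α) * ((1/lam) * (σ/2 * (T:ℝ)^(-γ))^2) := by ring
          _ ≤ (T:ℝ)^(1-2*α) * ((1/lam) * euclNorm (m θ)^2) :=
              mul_le_mul_of_nonneg_left h6 h7
      linarith
    · have hb := hbb θ hθ hcase.le
      have hsq' : b^2 ≤ euclNorm (m θ)^2 := pow_le_pow_left₀ hb0.le hb 2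
      have hstep : (1/lam) * b^2 * (T:ℝ)^(1 - 2*α)
          ≤ c^2 * ((1/lam) * euclNorm (m θ)^2) := by
        rw [hc2]
        have h6 : (1/lam) * b^2 ≤ (1/lam) * euclNorm (m θ)^2 :=
          mul_le_mul_of_nonneg_left hsq' (by positivity)
        have h7 : 0 ≤ (T:ℝ)^(1-2*α) := Real.rpow_nonneg hT0.le _
        calc (1/lam) * b^2 * (T:ℝ)^(1-2*α) = (T:ℝ)^(1-2*α) * ((1/lam) * b^2) := by ring
          _ ≤ (T:ℝ)^(1-2*α) * ((1/lam) * euclNorm (m θ)^2) :=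
              mul_le_mul_of_nonneg_left h6 h7
      linarith
  -- (ii)
  · intro ε hε
    have h3 := hpow0 (-γ) (by linarith)
    have h5 : Tendsto (fun T : ℕ => Kk * (T:ℝ)^(1/2 - α - 2*γ)) atTop (nhds 0) := by
      have h6 := (hpow0 (1/2 - α - 2*γ) he₂).const_mul Kk
      simpa using h6
    obtain ⟨T₀, hT₀⟩ := Filter.eventually_atTop.mp
      (((h5.eventually_lt_const hε).and (h3.eventually_lt_const hε₀)).and
        (eventually_ge_atTop 1))
    refine ⟨T₀, fun T hT θ hθ hle => ?_⟩
    obtain ⟨⟨hε', hδε⟩, hT1⟩ := hT₀ T hT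
    have hT0 : (0:ℝ) < T := by exact_mod_cast Nat.lt_of_lt_of_le Nat.zero_lt_one hT1
    set c : ℝ := (T:ℝ)^((1:ℝ)/2 - α) with hc
    have hc0 : 0 ≤ c := Real.rpow_nonneg hT0.le _
    have hδ0 : 0 ≤ (T:ℝ)^(-γ) := Real.rpow_nonneg hT0.le _
    have h0e : 0 ≤ euclNorm (θ - θ₀) := euclNorm_nonneg _
    have hpn : ‖θ - θ₀‖ ≤ euclNorm (θ - θ₀) := pi_norm_le_euclNorm _
    have hlt : ‖θ - θ₀‖ < ε₀ := lt_of_le_of_lt (hpn.trans hle) hδε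
    have hres := hresid θ hlt
    have heq : c • m θ - (c • M).mulVec (θ - θ₀) = c • (m θ - M.mulVec (θ - θ₀)) := by
      rw [Matrix.smul_mulVec, smul_sub]
    rw [heq, euclNorm_smul, abs_of_nonneg hc0]
    have h8 : euclNorm (θ - θ₀) * euclNorm (θ - θ₀) ≤ (T:ℝ)^(-γ) * (T:ℝ)^(-γ) :=
      mul_le_mul hle hle h0e hδ0
    have h9 : c * euclNorm (m θ - M.mulVec (θ - θ₀))
        ≤ c * (Kk * ((T:ℝ)^(-γ) * (T:ℝ)^(-γ))) := by
      apply mul_le_mul_of_nonneg_left _ hc0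
      calc euclNorm (m θ - M.mulVec (θ - θ₀))
          ≤ Kk * (euclNorm (θ - θ₀) * euclNorm (θ - θ₀)) := hres
        _ ≤ Kk * ((T:ℝ)^(-γ) * (T:ℝ)^(-γ)) := mul_le_mul_of_nonneg_left h8 hKk0
    have h10 : c * (Kk * ((T:ℝ)^(-γ) * (T:ℝ)^(-γ))) = Kk * (T:ℝ)^(1/2 - α - 2*γ) := by
      rw [hc, show (T:ℝ)^(1/2 - α - 2*γ)
          = (T:ℝ)^((1:ℝ)/2 - α) * ((T:ℝ)^(-γ) * (T:ℝ)^(-γ)) by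
        rw [← Real.rpow_add hT0, ← Real.rpow_add hT0]; ring_nf]
      ring
    calc c * euclNorm (m θ - M.mulVec (θ - θ₀))
        ≤ c * (Kk * ((T:ℝ)^(-γ) * (T:ℝ)^(-γ))) := h9
      _ = Kk * (T:ℝ)^(1/2 - α - 2*γ) := h10
      _ ≤ ε := hε'.le
  -- (iii)
  · set c₀ : ℝ := (1/lam) * σ^2 with hc₀
    have hc₀pos : 0 < c₀ := by positivity
    refine tendsto_atTop_mono' atTop ?_ (hpow (1 - 2*α - 2*γ) he₁ c₀ hc₀pos)
    filter_upwards [eventually_ge_atTop 1] with T hT1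
    have hT0 : (0:ℝ) < T := by exact_mod_cast Nat.lt_of_lt_of_le Nat.zero_lt_one hT1
    set c : ℝ := (T:ℝ)^((1:ℝ)/2 - α) with hc
    have hc0 : 0 ≤ c := Real.rpow_nonneg hT0.le _
    have hc2 : c^2 = (T:ℝ)^(1 - 2*α) := by
      rw [hc, sq, ← Real.rpow_add hT0]; ring_nf
    obtain ⟨hH, hevθ⟩ := hSH θ₀ hθ₀
    -- lower bound on the Rayleigh set
    have hmineig : c₀ * (T:ℝ)^(1 - 2*α)
        ≤ minEig ((c • M)ᵀ * (S θ₀)⁻¹ * (c • M)) := by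
      apply le_csInf
      · refine ⟨(fun i => if i = (⟨0, by omega⟩ : Fin q) then (1:ℝ) else 0) ⬝ᵥ
          ((c • M)ᵀ * (S θ₀)⁻¹ * (c • M)).mulVec
            (fun i => if i = (⟨0, by omega⟩ : Fin q) then (1:ℝ) else 0),
          (fun i => if i = (⟨0, by omega⟩ : Fin q) then (1:ℝ) else 0), ?_, rfl⟩
        unfold euclNorm
        rw [show (∑ i : Fin q, (if i = (⟨0, by omega⟩ : Fin q) then (1:ℝ) else 0) ^ 2) = 1 by
          rw [Finset.sum_eq_single (⟨0, by omega⟩ : Fin q)]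
          · simp
          · intro i _ hi; simp [hi]
          · intro h; exact absurd (Finset.mem_univ _) h]
        exact Real.sqrt_one
      · rintro r ⟨x, hx1, rfl⟩
        set y : Fin k → ℝ := (c • M).mulVec x with hy
        have hform : x ⬝ᵥ ((c • M)ᵀ * (S θ₀)⁻¹ * (c • M)).mulVec x
            = y ⬝ᵥ (S θ₀)⁻¹.mulVec y := by
          rw [show ((c • M)ᵀ * (S θ₀)⁻¹ * (c • M)).mulVec x
              = (c • M)ᵀ.mulVec ((S θ₀)⁻¹.mulVec ((c • M).mulVec x)) by
            rw [Matrix.mulVec_mulVec, Matrix.mulVec_mulVec]]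
          rw [Matrix.dotProduct_mulVec, ← Matrix.mulVec_transpose, Matrix.transpose_transpose]
        rw [hform]
        have hquad := quad_lower lam hlam (S θ₀) hH hevθ y
        rw [← euclNorm_sq] at hquad
        have hyn : euclNorm y = c * euclNorm (M.mulVec x) := by
          rw [hy, Matrix.smul_mulVec, euclNorm_smul, abs_of_nonneg hc0]
        have hMx : σ ≤ euclNorm (M.mulVec x) := by
          have := hMlow x
          rw [hx1, mul_one] at this
          exact this
        have hyge : σ * c ≤ euclNorm y := by
          rw [hyn]
          calc σ * c = c * σ := by ring
            _ ≤ c * euclNorm (M.mulVec x) := mul_le_mul_of_nonneg_left hMx hc0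
        have hy2 : (σ * c)^2 ≤ euclNorm y ^ 2 := pow_le_pow_left₀ (by positivity) hyge 2
        calc c₀ * (T:ℝ)^(1 - 2*α) = (1/lam) * (σ * c)^2 := by rw [hc₀, ← hc2]; ring
          _ ≤ (1/lam) * euclNorm y ^ 2 := mul_le_mul_of_nonneg_left hy2 (by positivity)
          _ ≤ y ⬝ᵥ (S θ₀)⁻¹.mulVec y := hquad
    have hδ2 : ((T:ℝ)^(-γ))^2 = (T:ℝ)^(-(2*γ)) := by
      rw [sq, ← Real.rpow_add hT0]; ring_nf
    have h7 : 0 ≤ ((T:ℝ)^(-γ))^2 := sq_nonneg _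
    calc c₀ * (T:ℝ)^(1 - 2*α - 2*γ)
        = ((T:ℝ)^(-γ))^2 * (c₀ * (T:ℝ)^(1 - 2*α)) := by
          rw [hδ2, show (1:ℝ) - 2*α - 2*γ = -(2*γ) + (1 - 2*α) by ring,
            Real.rpow_add hT0]
          ring
      _ ≤ ((T:ℝ)^(-γ))^2 * minEig ((c • M)ᵀ * (S θ₀)⁻¹ * (c • M)) :=
          mul_le_mul_of_nonneg_left hmineig h7
end
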